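/- arXiv:1312.0551 — 10 statements merged into one kernel-verified Lean document; each statement's English description precedes it below -/
import Mathlib

section
/- Let w and w' be Dyck words of type A of semilength n, and for a Dyck word define its height sequence by letting the i-th entry be the number of u's occurring before the i-th occurrence of r. Then the height sequence of w is componentwise less than or equal to that of w' if and only if the height sequence of ψ(w) is componentwise less than or equal to that of ψ(w'). In other words, ψ is an automorphism of the lattice D_n^A of Dyck paths of type A under dominance order. -/
/-- A word over the alphabet `{u, r}` is modeled as a `List Bool`,
where `true` stands for the letter `u` and `false` for `r`. -/
def IsDyckWordA (n : ℕ) (w : List Bool) : Prop :=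
  w.length = 2 * n ∧ w.count true = n ∧ w.count false = n ∧
    ∀ ℓ : ℕ, (w.take ℓ).count false ≤ (w.take ℓ).count true

/-- The height sequence of a word: the `i`-th entry is the number of `u`'s
occurring before the `i`-th occurrence of `r`. -/
def heights : List Bool → List ℕ
  | [] => []
  | true :: w => (heights w).map (· + 1)
  | false :: w => 0 :: heights w

/-- The map `ψ`: replace every `u` by `r` and every `r` by `u`, then reverse the word. -/
def psi (w : List Bool) : List Bool :=
  (w.map (fun b => !b)).reverse

lemma heights_append_true (v : List Bool) : heights (v ++ [true]) = heights v := by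
  induction v with
  | nil => simp [heights]
  | cons b v ih => cases b <;> simp [heights, ih]

lemma heights_append_false (v : List Bool) :
    heights (v ++ [false]) = heights v ++ [v.count true] := by
  induction v with
  | nil => simp [heights]
  | cons b v ih => cases b <;> simp [heights, ih, List.count_cons]

lemma heights_length (v : List Bool) : (heights v).length = v.count false := by
  induction v with
  | nil => simp [heights]
  | cons b v ih => cases b <;> simp [heights, ih, List.count_cons]

lemma count_true_map_not (v : List Bool) : (v.map not).count true = v.count false := by
  induction v with
  | nil => simp
  | cons b v ih => cases b <;> simp [List.count_cons, ih]

lemma count_false_map_not (v : List Bool) : (v.map not).count false = v.count true := by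
  induction v with
  | nil => simp
  | cons b v ih => cases b <;> simp [List.count_cons, ih]

lemma heights_reverse (v : List Bool) :
    heights v.reverse = ((heights v).map (fun x => v.count true - x)).reverse := by
  induction v with
  | nil => simp [heights]
  | cons b v ih =>
    cases b with
    | true =>
      have : (true :: v).reverse = v.reverse ++ [true] := by simp
      rw [this, heights_append_true, ih]
      simp [heights, List.count_cons, Function.comp]
    | false =>
      have : (false :: v).reverse = v.reverse ++ [false] := by simp
      rw [this, heights_append_false, ih]
      simp [heights, List.count_cons, List.count_reverse]

lemma heights_map_not (v : List Bool) :
    heights (v.map not) =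
      (List.range (v.count true)).map (fun j => (heights v).countP (fun x => x ≤ j)) := by
  induction v with
  | nil => simp [heights]
  | cons b v ih =>
    cases b with
    | true =>
      show heights (false :: v.map not) = _
      rw [List.count_cons]
      simp only [heights, ih]
      norm_num
      rw [List.range_succ_eq_map]
      simp only [List.map_cons, List.map_map]
      congr 1
      · symm
        rw [List.countP_eq_zero]
        intro a _
        simp [Function.comp]
      · apply List.map_congr_left
        intro j hj
        congr 1
        funext x
        simp [Function.comp]
    | false =>
      show heights (true :: v.map not) = _
      rw [List.count_cons]
      simp only [heights, ih, List.map_map]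
      apply List.map_congr_left
      intro j hj
      simp [List.countP_cons, Function.comp]

lemma psi_def (w : List Bool) : psi w = (w.map not).reverse := rfl

lemma psi_psi (w : List Bool) : psi (psi w) = w := by
  simp only [psi, List.map_reverse, List.reverse_reverse, List.map_map]
  have : ((fun b => !b) ∘ fun b => !b) = (id : Bool → Bool) := by
    funext b; simp
  rw [this, List.map_id]

lemma countP_le_of_pointwise (h : List ℕ) : ∀ h' : List ℕ, h.length = h'.length →
    (∀ i < h.length, h.getD i 0 ≤ h'.getD i 0) → ∀ j : ℕ,
    h'.countP (fun x => x ≤ j) ≤ h.countP (fun x => x ≤ j) := by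
  induction h with
  | nil =>
    intro h' hl _ j
    rw [List.length_nil, eq_comm, List.length_eq_zero_iff] at hl
    simp [hl]
  | cons a t ih =>
    intro h' hl hp j
    cases h' with
    | nil => simp at hl
    | cons a' t' =>
      simp only [List.length_cons, Nat.succ_inj] at hl
      rw [List.countP_cons, List.countP_cons]
      have h0 : a ≤ a' := hp 0 (Nat.succ_pos _)
      have ht := ih t' hl (fun i hi => hp (i + 1) (Nat.succ_lt_succ hi)) j
      have : (if (a' : ℕ) ≤ j then 1 else 0) ≤ (if (a : ℕ) ≤ j then 1 else 0) := by
        by_cases hc : a' ≤ j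
        · simp [hc, le_trans h0 hc]
        · simp [hc]
      simpa using Nat.add_le_add ht this

lemma getD_reverse {l : List ℕ} {i : ℕ} (hi : i < l.length) :
    l.reverse.getD i 0 = l.getD (l.length - 1 - i) 0 := by
  rw [List.getD_eq_getElem _ _ (by simpa using hi), List.getD_eq_getElem _ _ (by omega)]
  exact List.getElem_reverse ..

lemma getD_range_map (f : ℕ → ℕ) {n j : ℕ} (hj : j < n) :
    ((List.range n).map f).getD j 0 = f j := by
  rw [List.getD_eq_getElem _ _ (by simpa using hj)]
  simp

lemma isDyck_psi {n : ℕ} {w : List Bool} (hw : IsDyckWordA n w) : IsDyckWordA n (psi w) := by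
  obtain ⟨hlen, hct, hcf, hpre⟩ := hw
  have hpsilen : (psi w).length = 2 * n := by simp [psi, hlen]
  have hpsit : (psi w).count true = n := by
    rw [psi_def, List.count_reverse, count_true_map_not, hcf]
  have hpsif : (psi w).count false = n := by
    rw [psi_def, List.count_reverse, count_false_map_not, hct]
  refine ⟨hpsilen, hpsit, hpsif, ?_⟩
  intro ℓ
  rcases le_or_gt (2 * n) ℓ with hcase | hcase
  · rw [List.take_of_length_le (by omega)]
    rw [hpsif, hpsit]
  · have hℓ : ℓ ≤ (w.map not).length := by simp [hlen]; omega
    have htake : (psi w).take ℓ = ((w.map not).drop ((w.map not).length - ℓ)).reverse := by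
      rw [psi_def, List.take_reverse]
    set k := (w.map not).length - ℓ with hk
    have hsplit : ∀ b : Bool, (w.map not).count b =
        ((w.map not).take k).count b + ((w.map not).drop k).count b := by
      intro b
      rw [← List.count_append, List.take_append_drop]
    have htk : (w.map not).take k = (w.take k).map not := by
      rw [List.map_take]
    have h1 : ((psi w).take ℓ).count false = n - (w.take k).count true := by
      rw [htake, List.count_reverse]
      have := hsplit false
      rw [count_false_map_not, htk, count_false_map_not] at this
      omega
    have h2 : ((psi w).take ℓ).count true = n - (w.take k).count false := by
      rw [htake, List.count_reverse]
      have := hsplit true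
      rw [count_true_map_not, htk, count_true_map_not] at this
      omega
    rw [h1, h2]
    exact Nat.sub_le_sub_left (hpre k) n

lemma heights_psi_getD {n : ℕ} {w : List Bool} (hw : IsDyckWordA n w) {i : ℕ} (hi : i < n) :
    (heights (psi w)).getD i 0 = n - (heights w).countP (fun x => x ≤ n - 1 - i) := by
  obtain ⟨hlen, hct, hcf, hpre⟩ := hw
  have hcntmap : (w.map not).count true = n := by rw [count_true_map_not, hcf]
  have hlenh : (heights (w.map not)).length = n := by
    rw [heights_length, count_false_map_not, hct]
  rw [psi_def, heights_reverse, hcntmap]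
  rw [getD_reverse (by simp [hlenh]; omega)]
  rw [List.length_map, hlenh]
  have : ((heights (w.map not)).map (fun x => n - x)).getD (n - 1 - i) 0 =
      n - (heights (w.map not)).getD (n - 1 - i) 0 := by
    rw [List.getD_eq_getElem _ _ (by simp [hlenh]; omega),
        List.getD_eq_getElem _ _ (by omega : n - 1 - i < (heights (w.map not)).length)]
    simp
  rw [this, heights_map_not, hct, getD_range_map _ (by omega : n - 1 - i < n)]

lemma key {n : ℕ} {w w' : List Bool} (hw : IsDyckWordA n w) (hw' : IsDyckWordA n w')
    (H : ∀ i < n, (heights w).getD i 0 ≤ (heights w').getD i 0) :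
    ∀ i < n, (heights (psi w)).getD i 0 ≤ (heights (psi w')).getD i 0 := by
  intro i hi
  rw [heights_psi_getD hw hi, heights_psi_getD hw' hi]
  apply Nat.sub_le_sub_left
  apply countP_le_of_pointwise
  · rw [heights_length, heights_length, hw.2.2.1, hw'.2.2.1]
  · rw [heights_length, hw.2.2.1]
    exact H

theorem psi_lattice_automorphism (n : ℕ) (w w' : List Bool)
    (hw : IsDyckWordA n w) (hw' : IsDyckWordA n w') :
    (∀ i < n, (heights w).getD i 0 ≤ (heights w').getD i 0) ↔
      (∀ i < n, (heights (psi w)).getD i 0 ≤ (heights (psi w')).getD i 0) := by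
  constructor
  · exact key hw hw'
  · intro H i hi
    have := key (isDyck_psi hw) (isDyck_psi hw') H i hi
    rwa [psi_psi, psi_psi] at this
end

section
/- For every n > 0, the map w ↦ w·ψ(w) (concatenation of w with ψ(w)) is a bijection from the set of Dyck words of type B of semilength n onto the set of Dyck words w' of type A of semilength 2n satisfying ψ(w') = w' (the centrally symmetric Dyck words). -/
/-- A Dyck word of type B of semilength `n`: a word of length `2n` over `{u, r}`
every prefix of which contains at least as many `u`'s as `r`'s. -/
def IsDyckWordB (n : ℕ) (w : List Bool) : Prop :=
  w.length = 2 * n ∧ ∀ ℓ : ℕ, (w.take ℓ).count false ≤ (w.take ℓ).count true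

lemma count_map_not (l : List Bool) (b : Bool) :
    (l.map (fun x => !x)).count b = l.count (!b) := by
  induction l with
  | nil => simp
  | cons a t ih => cases a <;> cases b <;> simp_all [List.count_cons]

lemma psi_length (w : List Bool) : (psi w).length = w.length := by simp [psi]

lemma count_psi (w : List Bool) (b : Bool) : (psi w).count b = w.count (!b) := by
  simp [psi, count_map_not]

lemma psi_append (a b : List Bool) : psi (a ++ b) = psi b ++ psi a := by
  simp [psi]

lemma count_true_add_count_false (l : List Bool) :
    l.count true + l.count false = l.length := by
  induction l with
  | nil => simp
  | cons a t ih => cases a <;> simp [List.count_cons] <;> omega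

lemma take_reverse' (l : List α) (k : ℕ) :
    l.reverse.take k = (l.drop (l.length - k)).reverse := by
  have h := List.reverse_take (l := l.reverse) (i := k)
  rw [List.reverse_reverse, List.length_reverse] at h
  rw [← List.reverse_reverse (l.reverse.take k), h]

lemma psi_take_count (w : List Bool) (k : ℕ) (b : Bool) :
    ((psi w).take k).count b = (w.drop (w.length - k)).count (!b) := by
  unfold psi
  rw [take_reverse', List.count_reverse, List.length_map, ← List.map_drop,
    count_map_not]
theorem concat_psi_bijOn (n : ℕ) (hn : 0 < n) :
    Set.BijOn (fun w => w ++ psi w) {w | IsDyckWordB n w}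
      {w' | IsDyckWordA (2 * n) w' ∧ psi w' = w'} := by
  refine ⟨?_, ?_, ?_⟩
  · -- MapsTo
    rintro w ⟨hlen, hpre⟩
    have hct := count_true_add_count_false w
    refine ⟨⟨?_, ?_, ?_, ?_⟩, ?_⟩
    · simp [psi_length, hlen]; ring
    · simp only [List.count_append, count_psi, Bool.not_true]
      omega
    · simp only [List.count_append, count_psi]
      simp only [Bool.not_false]
      omega
    · intro ℓ
      rw [List.take_append]
      simp only [List.count_append, hlen]
      rw [psi_take_count, psi_take_count]
      simp only [Bool.not_false, Bool.not_true]
      set m := w.length - (ℓ - 2 * n) with hm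
      rcases le_or_gt ℓ (2 * n) with h | h
      · have : ℓ - 2 * n = 0 := by omega
        rw [hm, this]
        simp only [Nat.sub_zero, List.drop_length, List.count_nil]
        simpa using hpre ℓ
      · have htw : w.take ℓ = w := List.take_of_length_le (by omega)
        have hsplit := List.take_append_drop m w
        have hf := congrArg (List.count false) hsplit
        have ht := congrArg (List.count true) hsplit
        simp only [List.count_append] at hf ht
        have := hpre m
        rw [htw]
        omega
    · rw [psi_append, psi_psi]
  · -- InjOn
    rintro w1 ⟨h1, -⟩ w2 ⟨h2, -⟩ heq
    simp only at heq
    exact List.append_inj_left heq (by rw [h1, h2])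
  · -- SurjOn
    rintro w' ⟨⟨hlen, -, -, hpre⟩, hpsi⟩
    refine ⟨w'.take (2 * n), ⟨?_, ?_⟩, ?_⟩
    · simp [hlen]; omega
    · intro ℓ
      rw [List.take_take]
      exact hpre _
    · simp only
      have hkey : psi (w'.take (2 * n)) = w'.drop (2 * n) := by
        conv_rhs => rw [← hpsi]
        unfold psi
        rw [List.drop_reverse, List.length_map, hlen,
          show 2 * (2 * n) - 2 * n = 2 * n by omega, ← List.map_take]
      rw [hkey, List.take_append_drop]
end

section
/- For every n > 0, the poset D_n^B under the dominance order is a distributive lattice; more precisely, if h = (h_1,…,h_k) and h' = (h'_1,…,h'_{k'}) are elements of D_n^B with k ≥ k', then the sequence (min{h_1,h'_1},…,min{h_{k'},h'_{k'}}, h_{k'+1},…,h_k) and the sequence (max{h_1,h'_1},…,max{h_{k'},h'_{k'}}) both lie in D_n^B and are, respectively, the meet and the join of h and h' in the dominance order. -/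
/-- Height sequences of Dyck paths of type B of semilength `n` (written 0-indexed):
lists `(h_1, …, h_k)` with `1 ≤ k ≤ n`, `h_i ≥ i` for `i ∈ [k]`,
`h_1 ≤ h_2 ≤ … ≤ h_{k-1} ≤ 2n - k`, and `h_k ∈ {2n - k, 2n - k + 1}`. -/
def IsHeightSeqB (n : ℕ) (h : List ℕ) : Prop :=
  1 ≤ h.length ∧ h.length ≤ n ∧
    (∀ i < h.length, i + 1 ≤ h.getD i 0) ∧
    (∀ i : ℕ, i + 2 < h.length → h.getD i 0 ≤ h.getD (i + 1) 0) ∧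
    (2 ≤ h.length → h.getD (h.length - 2) 0 ≤ 2 * n - h.length) ∧
    (h.getD (h.length - 1) 0 = 2 * n - h.length ∨
      h.getD (h.length - 1) 0 = 2 * n - h.length + 1)

/-- The dominance order on height sequences of type B:
`(h_1, …, h_k) ≤_D (h'_1, …, h'_{k'})` iff `k ≥ k'` and `h_i ≤ h'_i` for all `i ∈ [k']`. -/
def DomLeB (a b : List ℕ) : Prop :=
  b.length ≤ a.length ∧ ∀ j < b.length, a.getD j 0 ≤ b.getD j 0

namespace DyckBAux

/-- The meet list: length of `a`, pointwise min on the common range. -/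
def meetL (a b : List ℕ) : List ℕ :=
  List.ofFn (fun j : Fin a.length =>
    if (j : ℕ) < b.length then min (a.getD j 0) (b.getD j 0) else a.getD j 0)

/-- The join list: length of `b`, pointwise max. -/
def joinL (a b : List ℕ) : List ℕ :=
  List.ofFn (fun j : Fin b.length => max (a.getD j 0) (b.getD j 0))

@[simp] lemma meetL_length (a b : List ℕ) : (meetL a b).length = a.length := by
  simp [meetL]

@[simp] lemma joinL_length (a b : List ℕ) : (joinL a b).length = b.length := by
  simp [joinL]

lemma meetL_getD (a b : List ℕ) {j : ℕ} (hj : j < a.length) :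
    (meetL a b).getD j 0 =
      if j < b.length then min (a.getD j 0) (b.getD j 0) else a.getD j 0 := by
  rw [List.getD_eq_getElem _ _ (by simpa using hj)]
  simp only [meetL, List.getElem_ofFn]

lemma joinL_getD (a b : List ℕ) {j : ℕ} (hj : j < b.length) :
    (joinL a b).getD j 0 = max (a.getD j 0) (b.getD j 0) := by
  rw [List.getD_eq_getElem _ _ (by simpa using hj)]
  simp only [joinL, List.getElem_ofFn]

/-- Valid height sequences are fully nondecreasing. -/
lemma mono_step {n : ℕ} {h : List ℕ} (hv : IsHeightSeqB n h) {i : ℕ}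
    (hi : i + 1 < h.length) : h.getD i 0 ≤ h.getD (i + 1) 0 := by
  obtain ⟨h1, h2, h3, h4, h5, h6⟩ := hv
  by_cases hc : i + 2 < h.length
  · exact h4 i hc
  · have e1 : i = h.length - 2 := by omega
    have e2 : i + 1 = h.length - 1 := by omega
    have := h5 (by omega)
    rw [e1, show h.length - 2 + 1 = h.length - 1 from by omega]
    omega

lemma mono {n : ℕ} {h : List ℕ} (hv : IsHeightSeqB n h) {i j : ℕ}
    (hij : i ≤ j) (hj : j < h.length) : h.getD i 0 ≤ h.getD j 0 := by
  induction j with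
  | zero =>
    have : i = 0 := by omega
    subst this; exact le_rfl
  | succ m ih =>
    rcases Nat.eq_or_lt_of_le hij with rfl | hlt
    · exact le_rfl
    · exact le_trans (ih (by omega) (by omega)) (mono_step hv hj)

lemma bound {n : ℕ} {h : List ℕ} (hv : IsHeightSeqB n h) {i : ℕ}
    (hi : i + 2 ≤ h.length) : h.getD i 0 ≤ 2 * n - (i + 2) := by
  have h5 := hv.2.2.2.2.1 (by omega)
  have hm : h.getD i 0 ≤ h.getD (h.length - 2) 0 := mono hv (by omega) (by omega)
  have : 2 * n - h.length ≤ 2 * n - (i + 2) := Nat.sub_le_sub_left (by omega) _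
  omega

lemma meet_mem {n : ℕ} {a b : List ℕ} (ha : IsHeightSeqB n a) (hb : IsHeightSeqB n b)
    (hk : b.length ≤ a.length) : IsHeightSeqB n (meetL a b) := by
  obtain ⟨a1, a2, a3, a4, a5, a6⟩ := ha
  obtain ⟨b1, b2, b3, b4, b5, b6⟩ := hb
  refine ⟨by simpa using a1, by simpa using a2, ?_, ?_, ?_, ?_⟩
  · intro i hi
    rw [meetL_length] at hi
    rw [meetL_getD _ _ hi]
    split
    · exact le_min (a3 i hi) (b3 i (by assumption))
    · exact a3 i hi
  · intro i hi
    rw [meetL_length] at hi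
    rw [meetL_getD _ _ (by omega), meetL_getD _ _ (by omega)]
    have hstepa : a.getD i 0 ≤ a.getD (i + 1) 0 :=
      mono_step ⟨a1, a2, a3, a4, a5, a6⟩ (by omega)
    split_ifs with h1 h2 h2
    · exact min_le_min hstepa (mono_step ⟨b1, b2, b3, b4, b5, b6⟩ h2)
    · exact le_trans (min_le_left _ _) hstepa
    · omega
    · exact hstepa
  · intro h2k
    rw [meetL_length] at h2k ⊢
    rw [meetL_getD _ _ (by omega)]
    have := a5 h2k
    split
    · exact le_trans (min_le_left _ _) this
    · exact this
  · rw [meetL_length]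
    rw [meetL_getD _ _ (by omega)]
    split
    · have hbl : b.length = a.length := by omega
      rw [hbl] at b6
      omega
    · exact a6

lemma join_mem {n : ℕ} {a b : List ℕ} (ha : IsHeightSeqB n a) (hb : IsHeightSeqB n b)
    (hk : b.length ≤ a.length) : IsHeightSeqB n (joinL a b) := by
  have ha' := ha
  have hb' := hb
  obtain ⟨a1, a2, a3, a4, a5, a6⟩ := ha
  obtain ⟨b1, b2, b3, b4, b5, b6⟩ := hb
  refine ⟨by simpa using b1, by simpa using le_trans hk a2, ?_, ?_, ?_, ?_⟩
  · intro i hi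
    rw [joinL_length] at hi
    rw [joinL_getD _ _ hi]
    exact le_trans (b3 i hi) (le_max_right _ _)
  · intro i hi
    rw [joinL_length] at hi
    rw [joinL_getD _ _ (by omega), joinL_getD _ _ (by omega)]
    exact max_le_max (mono_step ha' (by omega)) (mono_step hb' (by omega))
  · intro h2k
    rw [joinL_length] at h2k ⊢
    rw [joinL_getD _ _ (by omega)]
    have hbd : a.getD (b.length - 2) 0 ≤ 2 * n - b.length := by
      have := bound ha' (i := b.length - 2) (by omega)
      omega
    exact max_le hbd (b5 h2k)
  · rw [joinL_length]
    rw [joinL_getD _ _ (by omega)]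
    rcases eq_or_lt_of_le hk with heq | hlt
    · rw [← heq] at a6
      omega
    · have hbd : a.getD (b.length - 1) 0 ≤ 2 * n - b.length := by
        have := bound ha' (i := b.length - 1) (by omega)
        omega
      omega

lemma meet_le_left (a b : List ℕ) : DomLeB (meetL a b) a := by
  refine ⟨by simp, fun j hj => ?_⟩
  rw [meetL_getD _ _ hj]
  split
  · exact min_le_left _ _
  · exact le_rfl

lemma meet_le_right {a b : List ℕ} (hk : b.length ≤ a.length) : DomLeB (meetL a b) b := by
  refine ⟨by simpa using hk, fun j hj => ?_⟩
  rw [meetL_getD _ _ (by omega)]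
  rw [if_pos hj]
  exact min_le_right _ _

lemma meet_glb {a b z : List ℕ} (hza : DomLeB z a) (hzb : DomLeB z b) :
    DomLeB z (meetL a b) := by
  refine ⟨by simpa using hza.1, fun j hj => ?_⟩
  rw [meetL_length] at hj
  rw [meetL_getD _ _ hj]
  split
  · exact le_min (hza.2 j hj) (hzb.2 j (by assumption))
  · exact hza.2 j hj

lemma left_le_join {a b : List ℕ} (hk : b.length ≤ a.length) : DomLeB a (joinL a b) := by
  refine ⟨by simpa using hk, fun j hj => ?_⟩
  rw [joinL_length] at hj
  rw [joinL_getD _ _ hj]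
  exact le_max_left _ _

lemma right_le_join (a b : List ℕ) : DomLeB b (joinL a b) := by
  refine ⟨by simp, fun j hj => ?_⟩
  rw [joinL_length] at hj
  rw [joinL_getD _ _ hj]
  exact le_max_right _ _

lemma join_lub {a b z : List ℕ} (hza : DomLeB a z) (hzb : DomLeB b z) :
    DomLeB (joinL a b) z := by
  refine ⟨by simpa using hzb.1, fun j hj => ?_⟩
  rw [joinL_getD _ _ (lt_of_lt_of_le hj hzb.1)]
  exact max_le (hza.2 j hj) (hzb.2 j hj)

/-- Embedding of lists into `ℕ → WithTop ℕ`. -/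
def Fm (h : List ℕ) : ℕ → WithTop ℕ :=
  fun j => if j < h.length then ((h.getD j 0 : ℕ) : WithTop ℕ) else ⊤

lemma domLeB_iff (a b : List ℕ) : DomLeB a b ↔ Fm a ≤ Fm b := by
  constructor
  · rintro ⟨hlen, hj⟩ j
    unfold Fm
    split_ifs with h1 h2 h2
    · exact WithTop.coe_le_coe.mpr (hj j h2)
    · exact le_top
    · omega
    · exact le_rfl
  · intro hF
    have hlen : b.length ≤ a.length := by
      by_contra hc
      push_neg at hc
      have := hF a.length
      unfold Fm at this
      rw [if_neg (lt_irrefl _), if_pos hc, top_le_iff] at this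
      exact WithTop.coe_ne_top this
    refine ⟨hlen, fun j hj => ?_⟩
    have := hF j
    unfold Fm at this
    rw [if_pos (lt_of_lt_of_le hj hlen), if_pos hj] at this
    exact WithTop.coe_le_coe.mp this

lemma Fm_injective : Function.Injective Fm := by
  intro a b hab
  have hlen : a.length = b.length := by
    by_contra hc
    rcases Nat.lt_or_ge a.length b.length with hlt | hge
    · have := congrFun hab a.length
      unfold Fm at this
      rw [if_neg (lt_irrefl _), if_pos hlt] at this
      exact (WithTop.coe_ne_top this.symm)
    · have hlt : b.length < a.length := by omega
      have := congrFun hab b.length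
      unfold Fm at this
      rw [if_pos hlt, if_neg (lt_irrefl _)] at this
      exact (WithTop.coe_ne_top this)
  refine List.ext_getElem hlen fun i h1 h2 => ?_
  have := congrFun hab i
  unfold Fm at this
  rw [if_pos h1, if_pos h2] at this
  have : a.getD i 0 = b.getD i 0 := by exact_mod_cast this
  rwa [List.getD_eq_getElem _ _ h1, List.getD_eq_getElem _ _ h2] at this

lemma Fm_meetL {a b : List ℕ} (hk : b.length ≤ a.length) :
    Fm (meetL a b) = Fm a ⊓ Fm b := by
  funext j
  rw [Pi.inf_apply]
  unfold Fm
  rw [meetL_length]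
  by_cases hja : j < a.length
  · rw [if_pos hja, if_pos hja, meetL_getD _ _ hja]
    by_cases hjb : j < b.length
    · rw [if_pos hjb, if_pos hjb]
      exact WithTop.coe_min _ _
    · rw [if_neg hjb, if_neg hjb, inf_top_eq]
  · rw [if_neg hja, if_neg hja, if_neg (by omega), top_inf_eq]

lemma Fm_joinL {a b : List ℕ} (hk : b.length ≤ a.length) :
    Fm (joinL a b) = Fm a ⊔ Fm b := by
  funext j
  rw [Pi.sup_apply]
  unfold Fm
  rw [joinL_length]
  by_cases hjb : j < b.length
  · rw [if_pos hjb, if_pos hjb, if_pos (by omega), joinL_getD _ _ hjb]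
    exact WithTop.coe_max _ _
  · rw [if_neg hjb, if_neg hjb, sup_top_eq]

end DyckBAux

open DyckBAux in
theorem dyckB_distribLattice_meet_join (n : ℕ) (hn : 0 < n) :
    (∃ inst : DistribLattice {x : List ℕ // IsHeightSeqB n x},
      ∀ a b : {x : List ℕ // IsHeightSeqB n x}, inst.le a b ↔ DomLeB a.1 b.1) ∧
    ∀ h h' : List ℕ, IsHeightSeqB n h → IsHeightSeqB n h' → h'.length ≤ h.length →
      (IsHeightSeqB n (List.ofFn (fun j : Fin h.length =>
          if (j : ℕ) < h'.length then min (h.getD j 0) (h'.getD j 0) else h.getD j 0)) ∧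
       IsHeightSeqB n (List.ofFn (fun j : Fin h'.length =>
          max (h.getD j 0) (h'.getD j 0))) ∧
       DomLeB (List.ofFn (fun j : Fin h.length =>
          if (j : ℕ) < h'.length then min (h.getD j 0) (h'.getD j 0) else h.getD j 0)) h ∧
       DomLeB (List.ofFn (fun j : Fin h.length =>
          if (j : ℕ) < h'.length then min (h.getD j 0) (h'.getD j 0) else h.getD j 0)) h' ∧
       (∀ z : List ℕ, IsHeightSeqB n z → DomLeB z h → DomLeB z h' →
          DomLeB z (List.ofFn (fun j : Fin h.length =>
            if (j : ℕ) < h'.length then min (h.getD j 0) (h'.getD j 0) else h.getD j 0))) ∧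
       DomLeB h (List.ofFn (fun j : Fin h'.length => max (h.getD j 0) (h'.getD j 0))) ∧
       DomLeB h' (List.ofFn (fun j : Fin h'.length => max (h.getD j 0) (h'.getD j 0))) ∧
       (∀ z : List ℕ, IsHeightSeqB n z → DomLeB h z → DomLeB h' z →
          DomLeB (List.ofFn (fun j : Fin h'.length => max (h.getD j 0) (h'.getD j 0))) z)) := by
  constructor
  · letI instMin : Min {x : List ℕ // IsHeightSeqB n x} :=
      ⟨fun a b =>
        if hab : b.1.length ≤ a.1.length then ⟨meetL a.1 b.1, meet_mem a.2 b.2 hab⟩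
        else ⟨meetL b.1 a.1, meet_mem b.2 a.2 (le_of_not_ge hab)⟩⟩
    letI instMax : Max {x : List ℕ // IsHeightSeqB n x} :=
      ⟨fun a b =>
        if hab : b.1.length ≤ a.1.length then ⟨joinL a.1 b.1, join_mem a.2 b.2 hab⟩
        else ⟨joinL b.1 a.1, join_mem b.2 a.2 (le_of_not_ge hab)⟩⟩
    have map_inf : ∀ a b : {x : List ℕ // IsHeightSeqB n x},
        Fm (a ⊓ b).1 = Fm a.1 ⊓ Fm b.1 := by
      intro a b
      show Fm (dite _ _ _ : {x : List ℕ // IsHeightSeqB n x}).1 = _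
      split_ifs with hab
      · exact Fm_meetL hab
      · rw [Fm_meetL (le_of_not_ge hab), inf_comm]
    have map_sup : ∀ a b : {x : List ℕ // IsHeightSeqB n x},
        Fm (a ⊔ b).1 = Fm a.1 ⊔ Fm b.1 := by
      intro a b
      show Fm (dite _ _ _ : {x : List ℕ // IsHeightSeqB n x}).1 = _
      split_ifs with hab
      · exact Fm_joinL hab
      · rw [Fm_joinL (le_of_not_ge hab), sup_comm]
    letI instLE : LE {x : List ℕ // IsHeightSeqB n x} := ⟨fun a b => Fm a.1 ≤ Fm b.1⟩
    letI instLT : LT {x : List ℕ // IsHeightSeqB n x} := ⟨fun a b => Fm a.1 < Fm b.1⟩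
    refine ⟨Function.Injective.distribLattice (fun x : {x : List ℕ // IsHeightSeqB n x} => Fm x.1)
        (Fm_injective.comp Subtype.val_injective) Iff.rfl Iff.rfl map_sup map_inf, fun a b => ?_⟩
    exact (domLeB_iff a.1 b.1).symm
  · intro h h' hh hh' hk
    exact ⟨meet_mem hh hh' hk, join_mem hh hh' hk, meet_le_left h h',
      meet_le_right hk, fun z _ hza hzb => meet_glb hza hzb,
      left_le_join hk, right_le_join h h', fun z _ hza hzb => join_lub hza hzb⟩
end

section
/- An element of D_n^B with height sequence (h_1,…,h_k) is join-irreducible in the lattice D_n^B if and only if there exists a unique index i ∈ [k] such that h_i > i and h_i > h_{i−1}, where h_0 := 0. -/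
/-- `p` is the join of `x` and `y` in `D_n^B`, i.e. the least upper bound of `{x, y}`
with respect to the dominance order. -/
def IsJoinB (n : ℕ) (x y p : List ℕ) : Prop :=
  DomLeB x p ∧ DomLeB y p ∧
    ∀ z : List ℕ, IsHeightSeqB n z → DomLeB x z → DomLeB y z → DomLeB p z

/-- `p` is join-irreducible in the lattice `D_n^B`: it is not the least element,
and whenever `p` is the join of two elements `x` and `y`, then `p = x` or `p = y`. -/
def JoinIrredB (n : ℕ) (p : List ℕ) : Prop :=
  IsHeightSeqB n p ∧
    ¬(∀ q : List ℕ, IsHeightSeqB n q → DomLeB p q) ∧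
    ∀ x y : List ℕ, IsHeightSeqB n x → IsHeightSeqB n y →
      IsJoinB n x y p → p = x ∨ p = y


def AscB (p : List ℕ) (j : ℕ) : Prop :=
  j < p.length ∧ j + 1 < p.getD j 0 ∧
    (if j = 0 then 0 else p.getD (j - 1) 0) < p.getD j 0

lemma getD_set' (l : List ℕ) (i v j : ℕ) :
    (l.set i v).getD j 0 = if i = j ∧ j < l.length then v else l.getD j 0 := by
  simp only [List.getD_eq_getElem?_getD, List.getElem?_set]
  by_cases hij : i = j
  · subst hij
    by_cases hl : i < l.length
    · simp [hl]
    · simp [hl, List.getElem?_eq_none (le_of_not_gt hl)]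
  · simp [hij]

lemma adjB {n : ℕ} {p : List ℕ} (H : IsHeightSeqB n p) {i : ℕ} (hi : i + 1 < p.length) :
    p.getD i 0 ≤ p.getD (i + 1) 0 := by
  obtain ⟨h1, h2, hA, hB, hC, hD⟩ := H
  by_cases h : i + 2 < p.length
  · exact hB i h
  · have e1 : i = p.length - 2 := by omega
    have e2 : i + 1 = p.length - 1 := by omega
    have hc := hC (by omega)
    rw [e2, e1]
    rcases hD with hd | hd <;> omega

lemma monoB {n : ℕ} {p : List ℕ} (H : IsHeightSeqB n p) {i j : ℕ} (hij : i ≤ j)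
    (hj : j < p.length) : p.getD i 0 ≤ p.getD j 0 := by
  induction j with
  | zero => have : i = 0 := by omega
            simp [this]
  | succ j ih =>
      rcases Nat.lt_succ_iff_lt_or_eq.mp (Nat.lt_succ_of_le hij) with h | h
      · exact le_trans (ih (by omega) (by omega)) (adjB H hj)
      · simp [h]

lemma interiorB {n : ℕ} {p : List ℕ} (H : IsHeightSeqB n p) {i : ℕ} (hi : i + 1 < p.length) :
    p.getD i 0 ≤ 2 * n - p.length := by
  have h1 := monoB H (i := i) (j := p.length - 2) (by omega) (by omega)
  exact le_trans h1 (H.2.2.2.2.1 (by omega))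

lemma lastB {n : ℕ} {p : List ℕ} (H : IsHeightSeqB n p) :
    2 * n - p.length ≤ p.getD (p.length - 1) 0 := by
  rcases H.2.2.2.2.2 with h | h <;> omega

lemma diagB {n : ℕ} {p : List ℕ} (H : IsHeightSeqB n p) :
    ∀ m, (∀ m' ≤ m, ¬ AscB p m') → m < p.length → p.getD m 0 = m + 1 := by
  intro m
  induction m with
  | zero =>
      intro hno hm
      have hA := H.2.2.1 0 hm
      by_contra hne
      exact hno 0 le_rfl ⟨hm, by omega, by rw [if_pos rfl]; omega⟩
  | succ m ih =>
      intro hno hm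
      have hprev := ih (fun m' h => hno m' (by omega)) (by omega)
      have hA := H.2.2.1 (m + 1) hm
      by_contra hne
      refine hno (m + 1) le_rfl ⟨hm, by omega, ?_⟩
      rw [if_neg (by omega : ¬ m + 1 = 0)]
      have h' : p.getD (m + 1 - 1) 0 = m + 1 := hprev
      omega

lemma ascB_prev {p : List ℕ} {j : ℕ} (h : AscB p j) (hj : j ≠ 0) :
    p.getD (j - 1) 0 < p.getD j 0 := by
  have := h.2.2; rwa [if_neg hj] at this

lemma set_hs {n : ℕ} {p : List ℕ} (H : IsHeightSeqB n p) {m : ℕ} (hm : AscB p m)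
    (hcase : m + 1 < p.length ∨ p.getD (p.length - 1) 0 = 2 * n - p.length + 1) :
    IsHeightSeqB n (p.set m (p.getD m 0 - 1)) := by
  obtain ⟨h1, h2, hA, hB, hC, hD⟩ := H
  obtain ⟨hmlt, hmgt, hmprev⟩ := hm
  have hlen : (p.set m (p.getD m 0 - 1)).length = p.length := List.length_set
  refine ⟨by omega, by omega, ?_, ?_, ?_, ?_⟩
  · intro i hi
    rw [hlen] at hi
    rw [getD_set']
    by_cases h : m = i ∧ i < p.length
    · rw [if_pos h]; obtain ⟨rfl, _⟩ := h; omega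
    · rw [if_neg h]; exact hA i hi
  · intro i hi
    rw [hlen] at hi
    rw [getD_set', getD_set']
    have hBi := hB i hi
    by_cases h : m = i
    · subst h
      rw [if_pos ⟨rfl, by omega⟩, if_neg (by omega)]
      omega
    · rw [if_neg (by tauto)]
      by_cases h' : m = i + 1
      · subst h'
        rw [if_pos ⟨rfl, by omega⟩]
        have := ascB_prev ⟨hmlt, hmgt, hmprev⟩ (by omega)
        have e : i + 1 - 1 = i := by omega
        rw [e] at this
        omega
      · rw [if_neg (by tauto)]; exact hBi
  · intro hl
    rw [hlen] at hl ⊢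
    rw [getD_set']
    have hc := hC hl
    by_cases h : m = p.length - 2 ∧ p.length - 2 < p.length
    · rw [if_pos h, h.1]; omega
    · rw [if_neg h]; exact hc
  · rw [hlen, getD_set']
    by_cases h : m = p.length - 1 ∧ p.length - 1 < p.length
    · rw [if_pos h]
      obtain ⟨he, _⟩ := h
      rcases hcase with hc | hc
      · omega
      · left; rw [he] at hmgt ⊢; omega
    · rw [if_neg h]; exact hD

def extB (n : ℕ) (p : List ℕ) (w : ℕ) : List ℕ :=
  p.take (p.length - 1) ++ [2 * n - p.length - 1, w]

lemma extB_len {n : ℕ} {p : List ℕ} (hp : 1 ≤ p.length) (w : ℕ) :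
    (extB n p w).length = p.length + 1 := by
  simp [extB]; omega

lemma extB_getD_lt {n : ℕ} {p : List ℕ} (w : ℕ) {m : ℕ} (hm : m < p.length - 1) :
    (extB n p w).getD m 0 = p.getD m 0 := by
  rw [extB, List.getD_append _ _ _ m (by simp; omega)]
  simp only [List.getD_eq_getElem?_getD, List.getElem?_take]
  rw [if_pos hm]

lemma extB_getD_k1 {n : ℕ} {p : List ℕ} (w : ℕ) :
    (extB n p w).getD (p.length - 1) 0 = 2 * n - p.length - 1 := by
  rw [extB, List.getD_append_right _ _ _ _ (by simp)]
  simp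

lemma extB_getD_k {n : ℕ} {p : List ℕ} (hp : 1 ≤ p.length) (w : ℕ) :
    (extB n p w).getD p.length 0 = w := by
  rw [extB, List.getD_append_right _ _ _ _ (by simp)]
  have e : p.length - (p.take (p.length - 1)).length = 1 := by simp; omega
  rw [e]
  simp

lemma ext_hs {n : ℕ} {p : List ℕ} (H : IsHeightSeqB n p)
    (ha : AscB p (p.length - 1)) (hlast : p.getD (p.length - 1) 0 = 2 * n - p.length)
    {w : ℕ} (hw : w = 2 * n - p.length - 1 ∨ w = 2 * n - p.length) :
    IsHeightSeqB n (extB n p w) := by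
  obtain ⟨h1, h2, hA, hB, hC, hD⟩ := H
  obtain ⟨hmlt, hmgt, hmprev⟩ := ha
  -- k < n
  have hkn : p.length < n := by rw [hlast] at hmgt; omega
  have hlen := extB_len (n := n) (p := p) h1 w
  unfold IsHeightSeqB
  rw [hlen]
  refine ⟨by omega, by omega, ?_, ?_, ?_, ?_⟩
  · intro i hi
    rcases (by omega : i < p.length - 1 ∨ i = p.length - 1 ∨ i = p.length) with h | h | h
    · rw [extB_getD_lt w h]; exact hA i (by omega)
    · subst h; rw [extB_getD_k1]; omega
    · subst h; rw [extB_getD_k h1]; omega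
  · intro i hi
    rcases (by omega : i + 1 < p.length - 1 ∨ i + 1 = p.length - 1) with h | h
    · rw [extB_getD_lt w (by omega), extB_getD_lt w h]
      exact hB i (by omega)
    · rw [extB_getD_lt w (by omega), h, extB_getD_k1]
      have := hmprev
      rw [if_neg (by omega : ¬ p.length - 1 = 0)] at this
      have e : p.length - 1 - 1 = i := by omega
      rw [e, hlast] at this
      omega
  · intro _
    have e : p.length + 1 - 2 = p.length - 1 := by omega
    rw [e, extB_getD_k1]
    omega
  · have e : p.length + 1 - 1 = p.length := by omega
    rw [e, extB_getD_k h1]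
    omega

def botB (n : ℕ) : List ℕ := (List.range n).map (· + 1)

lemma botB_len (n : ℕ) : (botB n).length = n := by simp [botB]

lemma botB_getD {n j : ℕ} (hj : j < n) : (botB n).getD j 0 = j + 1 := by
  rw [botB, List.getD_eq_getElem _ _ (by simp [hj])]
  simp [hj]

lemma botB_hs {n : ℕ} (hn : 0 < n) : IsHeightSeqB n (botB n) := by
  have hl := botB_len n
  unfold IsHeightSeqB
  rw [hl]
  refine ⟨hn, le_rfl, ?_, ?_, ?_, ?_⟩
  · intro i hi; rw [botB_getD hi]
  · intro i hi; rw [botB_getD (by omega), botB_getD (by omega)]; omega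
  · intro h2; rw [botB_getD (by omega)]; omega
  · left; rw [botB_getD (by omega)]; omega

lemma rigid {n : ℕ} {p : List ℕ} (H : IsHeightSeqB n p) {a : ℕ} (ha : AscB p a)
    (hu : ∀ m, AscB p m → m = a) {x : List ℕ} (Hx : IsHeightSeqB n x)
    (hxp : DomLeB x p) (hxa : x.getD a 0 = p.getD a 0) : x = p := by
  have hklen : p.length ≤ x.length := hxp.1
  have hk1 : 1 ≤ p.length := H.1
  have step1 : ∀ m < p.length, x.getD m 0 = p.getD m 0 := by
    intro m
    induction m using Nat.strong_induction_on with
    | _ m ih =>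
      intro hm
      rcases lt_trichotomy m a with hlt | heq | hgt
      · have hpm : p.getD m 0 = m + 1 :=
          diagB H m (fun m' hm' hasc => by have := hu m' hasc; omega) hm
        have h1 := hxp.2 m hm
        have h2 := Hx.2.2.1 m (by omega)
        omega
      · rw [heq]; exact hxa
      · have hnasc : ¬ AscB p m := fun hasc => by have := hu m hasc; omega
        have hA := H.2.2.1 m hm
        have hadj : p.getD (m - 1) 0 ≤ p.getD m 0 := by
          have h := adjB H (i := m - 1) (by omega)
          have e : m - 1 + 1 = m := by omega
          rwa [e] at h
        have hcases : p.getD m 0 = m + 1 ∨ p.getD m 0 = p.getD (m - 1) 0 := by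
          by_contra hcon
          push_neg at hcon
          exact hnasc ⟨hm, by omega, by rw [if_neg (by omega : ¬ m = 0)]; omega⟩
        have hxle := hxp.2 m hm
        have hxA := Hx.2.2.1 m (by omega)
        rcases hcases with hc | hc
        · omega
        · have hprev := ih (m - 1) (by omega) (by omega)
          have hxadj : x.getD (m - 1) 0 ≤ x.getD m 0 := by
            have h := adjB Hx (i := m - 1) (by omega)
            have e : m - 1 + 1 = m := by omega
            rwa [e] at h
          omega
  have hlenx : x.length = p.length := by
    by_contra hne
    have hgt : p.length + 1 ≤ x.length := by omega
    have h1 := interiorB Hx (i := p.length - 1) (by omega)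
    have h2 := lastB H
    have h3 := step1 (p.length - 1) (by omega)
    have hn1 : p.length ≤ n := H.2.1
    omega
  exact List.ext_getElem (by omega) (fun i hh1 hh2 => by
    rw [← List.getD_eq_getElem x 0 hh1, ← List.getD_eq_getElem p 0 hh2]
    exact step1 i (by omega))

lemma set_ne {p : List ℕ} {i v : ℕ} (hi : i < p.length) (hv : v ≠ p.getD i 0) :
    p ≠ p.set i v := by
  intro he
  have h1 : p.getD i 0 = (p.set i v).getD i 0 := by rw [← he]
  rw [getD_set', if_pos ⟨rfl, hi⟩] at h1
  exact hv h1.symm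

lemma not_irred_two {n : ℕ} {p : List ℕ} (H : IsHeightSeqB n p) {i j : ℕ} (hij : i < j)
    (hi : AscB p i) (hj : AscB p j) : ¬ JoinIrredB n p := by
  rintro ⟨_, _, hirr⟩
  have hk1 := H.1
  have hjk := hj.1
  have hik1 : i + 1 < p.length := by omega
  have Hx : IsHeightSeqB n (p.set i (p.getD i 0 - 1)) := set_hs H hi (Or.inl hik1)
  have hxlen : (p.set i (p.getD i 0 - 1)).length = p.length := List.length_set
  have hxp : DomLeB (p.set i (p.getD i 0 - 1)) p := by
    refine ⟨by omega, fun m hm => ?_⟩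
    rw [getD_set']
    by_cases h : i = m ∧ m < p.length
    · rw [if_pos h]; rcases h with ⟨rfl, _⟩; omega
    · rw [if_neg h]
  have hxnep : p ≠ p.set i (p.getD i 0 - 1) := by
    refine set_ne hi.1 ?_
    have := hi.2.1
    omega
  by_cases hc : j + 1 < p.length ∨ p.getD (p.length - 1) 0 = 2 * n - p.length + 1
  · -- y is a set-modification at j
    have Hy : IsHeightSeqB n (p.set j (p.getD j 0 - 1)) := set_hs H hj hc
    have hylen : (p.set j (p.getD j 0 - 1)).length = p.length := List.length_set
    have hyp : DomLeB (p.set j (p.getD j 0 - 1)) p := by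
      refine ⟨by omega, fun m hm => ?_⟩
      rw [getD_set']
      by_cases h : j = m ∧ m < p.length
      · rw [if_pos h]; rcases h with ⟨rfl, _⟩; omega
      · rw [if_neg h]
    have hJ : IsJoinB n (p.set i (p.getD i 0 - 1)) (p.set j (p.getD j 0 - 1)) p := by
      refine ⟨hxp, hyp, fun z Hz hxz hyz => ⟨hxlen ▸ hxz.1, fun m hm => ?_⟩⟩
      by_cases h : i = m
      · have h2 := hyz.2 m hm
        rw [getD_set', if_neg (by omega)] at h2
        exact h2
      · have h2 := hxz.2 m hm
        rw [getD_set', if_neg (by tauto)] at h2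
        exact h2
    rcases hirr _ _ Hx Hy hJ with he | he
    · exact hxnep he
    · refine set_ne hj.1 ?_ he
      have := hj.2.1
      omega
  · push_neg at hc
    have hjeq : j = p.length - 1 := by omega
    have hlast : p.getD (p.length - 1) 0 = 2 * n - p.length := by
      rcases H.2.2.2.2.2 with hd | hd
      · exact hd
      · exact absurd hd hc.2
    have Hy : IsHeightSeqB n (extB n p (2 * n - p.length - 1)) :=
      ext_hs H (hjeq ▸ hj) hlast (Or.inl rfl)
    have hylen := extB_len (n := n) (p := p) hk1 (2 * n - p.length - 1)
    have hyp : DomLeB (extB n p (2 * n - p.length - 1)) p := by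
      refine ⟨by omega, fun m hm => ?_⟩
      rcases (by omega : m < p.length - 1 ∨ m = p.length - 1) with h | h
      · rw [extB_getD_lt _ h]
      · subst h; rw [extB_getD_k1, hlast]; omega
    have hJ : IsJoinB n (p.set i (p.getD i 0 - 1)) (extB n p (2 * n - p.length - 1)) p := by
      refine ⟨hxp, hyp, fun z Hz hxz hyz => ⟨hxlen ▸ hxz.1, fun m hm => ?_⟩⟩
      by_cases h : i = m
      · have h2 := hyz.2 m hm
        rw [extB_getD_lt _ (by omega)] at h2
        exact h2
      · have h2 := hxz.2 m hm
        rw [getD_set', if_neg (by tauto)] at h2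
        exact h2
    rcases hirr _ _ Hx Hy hJ with he | he
    · exact hxnep he
    · have h1 := congrArg List.length he
      rw [hylen] at h1
      omega

lemma irred_of_unique {n : ℕ} (hn : 0 < n) {p : List ℕ} (H : IsHeightSeqB n p) {a : ℕ}
    (ha : AscB p a) (hu : ∀ m, AscB p m → m = a) : JoinIrredB n p := by
  have hk1 := H.1
  have hak := ha.1
  have hnlen := H.2.1
  refine ⟨H, ?_, ?_⟩
  · intro hall
    have hb := hall (botB n) (botB_hs hn)
    have h1 : n ≤ p.length := by have := hb.1; rwa [botB_len] at this
    have h2 := hb.2 a (by rw [botB_len]; omega)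
    rw [botB_getD (by omega)] at h2
    have := ha.2.1; omega
  · intro x y Hx Hy hJ
    obtain ⟨hxp, hyp, hjoin⟩ := hJ
    by_contra hcon
    push_neg at hcon
    obtain ⟨hpx, hpy⟩ := hcon
    have hxa : x.getD a 0 < p.getD a 0 := by
      rcases lt_or_eq_of_le (hxp.2 a hak) with h | h
      · exact h
      · exact absurd (rigid H ha hu Hx hxp h) (fun he => hpx he.symm)
    have hya : y.getD a 0 < p.getD a 0 := by
      rcases lt_or_eq_of_le (hyp.2 a hak) with h | h
      · exact h
      · exact absurd (rigid H ha hu Hy hyp h) (fun he => hpy he.symm)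
    by_cases hc : a + 1 < p.length ∨ p.getD (p.length - 1) 0 = 2 * n - p.length + 1
    · have Hz := set_hs H ha hc
      have hzlen : (p.set a (p.getD a 0 - 1)).length = p.length := List.length_set
      have hxz : DomLeB x (p.set a (p.getD a 0 - 1)) := by
        refine ⟨by rw [hzlen]; exact hxp.1, fun m hm => ?_⟩
        rw [hzlen] at hm
        rw [getD_set']
        by_cases h : a = m ∧ m < p.length
        · rw [if_pos h]; rcases h with ⟨rfl, _⟩; omega
        · rw [if_neg h]; exact hxp.2 m hm
      have hyz : DomLeB y (p.set a (p.getD a 0 - 1)) := by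
        refine ⟨by rw [hzlen]; exact hyp.1, fun m hm => ?_⟩
        rw [hzlen] at hm
        rw [getD_set']
        by_cases h : a = m ∧ m < p.length
        · rw [if_pos h]; rcases h with ⟨rfl, _⟩; omega
        · rw [if_neg h]; exact hyp.2 m hm
      have hfin := (hjoin _ Hz hxz hyz).2 a (by rw [hzlen]; exact hak)
      rw [getD_set', if_pos ⟨rfl, hak⟩] at hfin
      have := ha.2.1
      omega
    · push_neg at hc
      have haeq : a = p.length - 1 := by omega
      have hlast : p.getD (p.length - 1) 0 = 2 * n - p.length := by
        rcases H.2.2.2.2.2 with hd | hd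
        · exact hd
        · exact absurd hd hc.2
      have hxa' : x.getD (p.length - 1) 0 < 2 * n - p.length := by
        have h := hxa; rw [haeq] at h; rw [hlast] at h; exact h
      have hya' : y.getD (p.length - 1) 0 < 2 * n - p.length := by
        have h := hya; rw [haeq] at h; rw [hlast] at h; exact h
      have hxlen : p.length + 1 ≤ x.length := by
        by_contra hcon2
        have hxl : x.length = p.length := by have := hxp.1; omega
        have hD := Hx.2.2.2.2.2
        rw [hxl] at hD
        omega
      have hylen : p.length + 1 ≤ y.length := by
        by_contra hcon2
        have hyl : y.length = p.length := by have := hyp.1; omega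
        have hD := Hy.2.2.2.2.2
        rw [hyl] at hD
        omega
      have Hz := ext_hs H (haeq ▸ ha) hlast (Or.inr rfl)
      have hzl := extB_len (n := n) (p := p) hk1 (2 * n - p.length)
      have hxz : DomLeB x (extB n p (2 * n - p.length)) := by
        refine ⟨by rw [hzl]; omega, fun m hm => ?_⟩
        rw [hzl] at hm
        rcases (by omega : m < p.length - 1 ∨ m = p.length - 1 ∨ m = p.length) with h | h | h
        · rw [extB_getD_lt _ h]; exact hxp.2 m (by omega)
        · subst h; rw [extB_getD_k1]; omega
        · subst h; rw [extB_getD_k hk1]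
          by_cases hh : p.length + 1 < x.length
          · have := interiorB Hx (i := p.length) (by omega); omega
          · have hxl : x.length = p.length + 1 := by omega
            have hD := Hx.2.2.2.2.2
            rw [hxl] at hD
            have e : p.length + 1 - 1 = p.length := by omega
            rw [e] at hD
            omega
      have hyz : DomLeB y (extB n p (2 * n - p.length)) := by
        refine ⟨by rw [hzl]; omega, fun m hm => ?_⟩
        rw [hzl] at hm
        rcases (by omega : m < p.length - 1 ∨ m = p.length - 1 ∨ m = p.length) with h | h | h
        · rw [extB_getD_lt _ h]; exact hyp.2 m (by omega)
        · subst h; rw [extB_getD_k1]; omega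
        · subst h; rw [extB_getD_k hk1]
          by_cases hh : p.length + 1 < y.length
          · have := interiorB Hy (i := p.length) (by omega); omega
          · have hyl : y.length = p.length + 1 := by omega
            have hD := Hy.2.2.2.2.2
            rw [hyl] at hD
            have e : p.length + 1 - 1 = p.length := by omega
            rw [e] at hD
            omega
      have hfin := (hjoin _ Hz hxz hyz).1
      rw [hzl] at hfin
      omega

theorem joinIrredB_iff (n : ℕ) (hn : 0 < n) (h : List ℕ) (H : IsHeightSeqB n h) :
    JoinIrredB n h ↔
      ∃! j : ℕ, j < h.length ∧ j + 1 < h.getD j 0 ∧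
        (if j = 0 then 0 else h.getD (j - 1) 0) < h.getD j 0 := by
  show JoinIrredB n h ↔ ∃! j : ℕ, AscB h j
  constructor
  · rintro ⟨H', hnl, hirr⟩
    have hex : ∃ a, AscB h a := by
      by_contra hno
      push_neg at hno
      apply hnl
      intro q Hq
      have hdiag : ∀ m < h.length, h.getD m 0 = m + 1 :=
        fun m hm => diagB H m (fun m' _ => hno m') hm
      have hlen : h.length = n := by
        have hD := H.2.2.2.2.2
        have hl := hdiag (h.length - 1) (by have := H.1; omega)
        have h1 := H.2.1
        have h2 := H.1
        omega
      refine ⟨by rw [hlen]; exact Hq.2.1, fun m hm => ?_⟩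
      have hm' : m < h.length := by have := Hq.2.1; omega
      rw [hdiag m hm']
      exact Hq.2.2.1 m hm
    obtain ⟨a, ha⟩ := hex
    refine ⟨a, ha, ?_⟩
    intro b hb
    by_contra hne
    rcases (by omega : b < a ∨ a < b) with hlt | hlt
    · exact not_irred_two H hlt hb ha ⟨H, hnl, hirr⟩
    · exact not_irred_two H hlt ha hb ⟨H, hnl, hirr⟩
  · rintro ⟨a, ha, hu⟩
    exact irred_of_unique hn H ha (fun m hm => hu m hm)
end

section
/- For every n > 0, the lattice D_n^A is isomorphic to the lattice of order ideals (downward-closed subsets, ordered by inclusion) of the poset (T_n^A, ≤), and the lattice D_n^B is isomorphic to the lattice of order ideals of the poset (T_n^B, ≤). -/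
/-- `D_n^A` realized as height sequences: functions `h : Fin n → ℕ` that are weakly
increasing and satisfy `i ≤ h i ≤ n` (1-indexed). The dominance order is componentwise. -/
def DyckASet (n : ℕ) : Set (Fin n → ℕ) :=
  {h | Monotone h ∧ ∀ i : Fin n, (i : ℕ) + 1 ≤ h i ∧ h i ≤ n}

/-- Membership in the triangular poset `T_n^A = {(i,j) : 1 ≤ i < j ≤ n}`. -/
def MemTA (n : ℕ) (q : ℕ × ℕ) : Prop :=
  1 ≤ q.1 ∧ q.1 < q.2 ∧ q.2 ≤ n

/-- Membership in the triangular poset `T_n^B = {(i,j) : 1 ≤ i < j ≤ 2n + 1 - i}`. -/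
def MemTB (n : ℕ) (q : ℕ × ℕ) : Prop :=
  1 ≤ q.1 ∧ q.1 < q.2 ∧ q.2 ≤ 2 * n + 1 - q.1

/-- The order on the triangular posets: `(a,b) ≤ (a',b')` iff `a ≥ a'` and `b ≤ b'`. -/
def TLe (p q : ℕ × ℕ) : Prop :=
  q.1 ≤ p.1 ∧ p.2 ≤ q.2

/-- Order ideals of `T_n^A`: downward-closed subsets. -/
def IsIdealTA (n : ℕ) (I : Set (ℕ × ℕ)) : Prop :=
  (∀ p ∈ I, MemTA n p) ∧ ∀ p ∈ I, ∀ q : ℕ × ℕ, MemTA n q → TLe q p → q ∈ I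

/-- Order ideals of `T_n^B`: downward-closed subsets. -/
def IsIdealTB (n : ℕ) (I : Set (ℕ × ℕ)) : Prop :=
  (∀ p ∈ I, MemTB n p) ∧ ∀ p ∈ I, ∀ q : ℕ × ℕ, MemTB n q → TLe q p → q ∈ I

namespace DyckAux

/-- The set representation of a type-A Dyck path. -/
def fA (n : ℕ) (h : Fin n → ℕ) : Set (ℕ × ℕ) :=
  {q | MemTA n q ∧ ∀ hi : q.1 - 1 < n, q.2 ≤ h ⟨q.1 - 1, hi⟩}

lemma fA_ideal (n : ℕ) (h : Fin n → ℕ) (hh : h ∈ DyckASet n) : IsIdealTA n (fA n h) := by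
  obtain ⟨hmono, _⟩ := hh
  constructor
  · exact fun p hp => hp.1
  · rintro p ⟨hpT, hph⟩ q hqT ⟨hq1, hq2⟩
    refine ⟨hqT, fun hi => ?_⟩
    have hp1 : p.1 - 1 < n := by
      have := hpT.2.1; have := hpT.2.2; omega
    have hle : (⟨p.1 - 1, hp1⟩ : Fin n) ≤ ⟨q.1 - 1, hi⟩ := by
      simp only [Fin.mk_le_mk]; omega
    exact le_trans (le_trans hq2 (hph hp1)) (hmono hle)

lemma fA_le_iff (n : ℕ) (a b : Fin n → ℕ) (ha : a ∈ DyckASet n) (hb : b ∈ DyckASet n) :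
    a ≤ b ↔ fA n a ⊆ fA n b := by
  constructor
  · intro hab q ⟨hqT, hqa⟩
    exact ⟨hqT, fun hi => le_trans (hqa hi) (hab _)⟩
  · intro hsub i
    rcases le_or_gt (a i) ((i : ℕ) + 1) with hcase | hcase
    · exact le_trans hcase (hb.2 i).1
    · have hq : ((i : ℕ) + 1, a i) ∈ fA n a := by
        refine ⟨⟨by omega, hcase, (ha.2 i).2⟩, fun hi => ?_⟩
        have : (⟨(i : ℕ) + 1 - 1, hi⟩ : Fin n) = i := by
          apply Fin.ext; simp
        rw [this]
      have := (hsub hq).2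
      have h2 := this (by simpa using i.isLt)
      have : (⟨(i : ℕ) + 1 - 1, by simpa using i.isLt⟩ : Fin n) = i := by
        apply Fin.ext; simp
      rwa [this] at h2

/-- row value -/
noncomputable def rowv (I : Set (ℕ × ℕ)) (r : ℕ) : ℕ := max r (sSup {b | (r, b) ∈ I})

lemma rowA_bdd (n : ℕ) (I : Set (ℕ × ℕ)) (hI : IsIdealTA n I) (r : ℕ) :
    BddAbove {b | (r, b) ∈ I} :=
  ⟨n, fun b hb => (hI.1 _ hb).2.2⟩

lemma memA_iff (n : ℕ) (I : Set (ℕ × ℕ)) (hI : IsIdealTA n I) (r b : ℕ) :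
    (r, b) ∈ I ↔ MemTA n (r, b) ∧ b ≤ rowv I r := by
  constructor
  · intro hmem
    exact ⟨hI.1 _ hmem, le_trans (le_csSup (rowA_bdd n I hI r) hmem) (le_max_right _ _)⟩
  · rintro ⟨hm, hle⟩
    have hrb : r < b := hm.2.1
    have hs : b ≤ sSup {b | (r, b) ∈ I} := by
      rcases le_max_iff.mp hle with h | h
      · omega
      · exact h
    have hne : {b | (r, b) ∈ I}.Nonempty := by
      by_contra hc
      rw [Set.not_nonempty_iff_eq_empty] at hc
      rw [hc] at hs
      simp [csSup_empty] at hs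
      omega
    have hmemS := Nat.sSup_mem hne (rowA_bdd n I hI r)
    exact hI.2 _ hmemS (r, b) hm ⟨le_refl _, hs⟩

lemma rowvA_le (n : ℕ) (I : Set (ℕ × ℕ)) (hI : IsIdealTA n I) (r : ℕ) (hr : r ≤ n) :
    rowv I r ≤ n := by
  rcases Set.eq_empty_or_nonempty {b | (r, b) ∈ I} with he | hne
  · simp [rowv, he, csSup_empty]; omega
  · have := (hI.1 _ (Nat.sSup_mem hne (rowA_bdd n I hI r))).2.2
    simp only [rowv, max_le_iff]; exact ⟨hr, this⟩

lemma rowvA_mono (n : ℕ) (I : Set (ℕ × ℕ)) (hI : IsIdealTA n I) (r r' : ℕ)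
    (hr : 1 ≤ r) (hrr : r ≤ r') : rowv I r ≤ rowv I r' := by
  rcases Set.eq_empty_or_nonempty {b | (r, b) ∈ I} with he | hne
  · simp only [rowv, he, csSup_empty]
    have : max r (⊥ : ℕ) = r := by simp
    rw [this]
    exact le_trans hrr (le_max_left _ _)
  · have hmemS := Nat.sSup_mem hne (rowA_bdd n I hI r)
    set s := sSup {b | (r, b) ∈ I} with hs
    have hT := hI.1 _ hmemS
    have hrs : r < s := hT.2.1
    rcases le_or_gt s r' with hcase | hcase
    · simp only [rowv]
      exact le_trans (max_le hrr hcase) (le_max_left _ _)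
    · have hmem' : (r', s) ∈ I := by
        apply hI.2 _ hmemS (r', s) ⟨by omega, hcase, hT.2.2⟩ ⟨hrr, le_refl _⟩
      have : s ≤ sSup {b | (r', b) ∈ I} := le_csSup (rowA_bdd n I hI r') hmem'
      simp only [rowv, max_le_iff]
      constructor
      · exact le_trans hrr (le_max_left _ _)
      · exact le_trans this (le_max_right _ _)


/-- the height function extracted from an ideal -/
noncomputable def hA (I : Set (ℕ × ℕ)) : ℕ → ℕ := fun r => rowv I r

lemma hA_dyck (n : ℕ) (I : Set (ℕ × ℕ)) (hI : IsIdealTA n I) :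
    (fun i : Fin n => rowv I ((i : ℕ) + 1)) ∈ DyckASet n := by
  refine ⟨fun i j hij => rowvA_mono n I hI _ _ (by omega) (by omega), fun i => ?_⟩
  exact ⟨le_max_left _ _, rowvA_le n I hI _ (by omega)⟩

lemma fA_hA (n : ℕ) (hn : 0 < n) (I : Set (ℕ × ℕ)) (hI : IsIdealTA n I) :
    fA n (fun i : Fin n => rowv I ((i : ℕ) + 1)) = I := by
  ext q
  obtain ⟨r, b⟩ := q
  constructor
  · rintro ⟨hm, hcond⟩
    have hr1 : 1 ≤ r := hm.1
    have hrn : r - 1 < n := by have := hm.2.1; have := hm.2.2; omega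
    have := hcond hrn
    simp only at this
    have hreq : r - 1 + 1 = r := by omega
    rw [hreq] at this
    exact (memA_iff n I hI r b).mpr ⟨hm, this⟩
  · intro hmem
    have h2 := (memA_iff n I hI r b).mp hmem
    refine ⟨h2.1, fun hi => ?_⟩
    simp only
    have hreq : r - 1 + 1 = r := by have := h2.1.1; omega
    rw [hreq]
    exact h2.2

/-- The full part-A statement. -/
lemma partA (n : ℕ) (hn : 0 < n) :
    ∃ f : {h : Fin n → ℕ // h ∈ DyckASet n} → {I : Set (ℕ × ℕ) // IsIdealTA n I},
      Function.Bijective f ∧ ∀ a b, a.1 ≤ b.1 ↔ (f a).1 ⊆ (f b).1 := by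
  refine ⟨fun a => ⟨fA n a.1, fA_ideal n a.1 a.2⟩, ⟨?_, ?_⟩, ?_⟩
  · intro a b hab
    have h : fA n a.1 = fA n b.1 := congrArg Subtype.val hab
    apply Subtype.ext
    apply le_antisymm
    · exact (fA_le_iff n a.1 b.1 a.2 b.2).mpr (le_of_eq h)
    · exact (fA_le_iff n b.1 a.1 b.2 a.2).mpr (ge_of_eq h)
  · rintro ⟨I, hI⟩
    exact ⟨⟨_, hA_dyck n I hI⟩, Subtype.ext (fA_hA n hn I hI)⟩
  · intro a b
    exact fA_le_iff n a.1 b.1 a.2 b.2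

end DyckAux


namespace DyckAuxB

/-- set representation of a type-B Dyck path -/
def fB (n : ℕ) (h : List ℕ) : Set (ℕ × ℕ) :=
  {q | MemTB n q ∧ (q.1 ≤ h.length → q.2 ≤ h.getD (q.1 - 1) 0)}

section heightseq
variable {n : ℕ} {h : List ℕ} (hs : IsHeightSeqB n h)
include hs

lemma hs_step : ∀ i, i + 1 < h.length → h.getD i 0 ≤ h.getD (i + 1) 0 := by
  intro i hi
  rcases lt_or_eq_of_le (by omega : i + 2 ≤ h.length) with hlt | heq
  · exact hs.2.2.2.1 i hlt
  · have h2 : 2 ≤ h.length := by omega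
    have hpre := hs.2.2.2.2.1 h2
    have hlast := hs.2.2.2.2.2
    have e1 : h.length - 2 = i := by omega
    have e2 : h.length - 1 = i + 1 := by omega
    rw [e1] at hpre; rw [e2] at hlast
    omega

lemma hs_mono : ∀ i j, i ≤ j → j < h.length → h.getD i 0 ≤ h.getD j 0 := by
  have key : ∀ d i, i + d < h.length → h.getD i 0 ≤ h.getD (i + d) 0 := by
    intro d
    induction d with
    | zero => intro i _; simp
    | succ m ih =>
      intro i hi
      have h1 := ih i (by omega)
      have h2 := hs_step hs (i + m) (by omega)
      calc h.getD i 0 ≤ h.getD (i + m) 0 := h1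
        _ ≤ h.getD (i + m + 1) 0 := h2
        _ = h.getD (i + (m + 1)) 0 := by ring_nf
  intro i j hij hj
  have := key (j - i) i (by omega)
  have e : i + (j - i) = j := by omega
  rwa [e] at this

/-- cap: the 0-indexed entry `h[i]` is at most `2n - i`. -/
lemma hs_cap : ∀ i < h.length, h.getD i 0 ≤ 2 * n - i := by
  intro i hi
  have hlast := hs.2.2.2.2.2
  have hkn := hs.2.1
  rcases eq_or_lt_of_le (by omega : i + 1 ≤ h.length) with heq | hlt
  · have e : h.length - 1 = i := by omega
    rw [e] at hlast
    omega
  · have h2 : 2 ≤ h.length := by omega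
    have hpre := hs.2.2.2.2.1 h2
    have := hs_mono hs i (h.length - 2) (by omega) (by omega)
    omega

lemma hs_ge : ∀ i < h.length, i + 1 ≤ h.getD i 0 := hs.2.2.1

lemma fB_ideal : IsIdealTB n (fB n h) := by
  constructor
  · exact fun p hp => hp.1
  · rintro p ⟨hpT, hph⟩ q hqT ⟨hq1, hq2⟩
    refine ⟨hqT, fun hqk => ?_⟩
    have hp1 : 1 ≤ p.1 := hpT.1
    have hq1' : 1 ≤ q.1 := hqT.1
    have hpk : p.1 ≤ h.length := le_trans hq1 hqk
    have := hph hpk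
    have hmono := hs_mono hs (p.1 - 1) (q.1 - 1) (by omega) (by omega)
    omega

end heightseq

lemma fB_le_iff {n : ℕ} {a b : List ℕ} (ha : IsHeightSeqB n a) (hb : IsHeightSeqB n b) :
    DomLeB a b ↔ fB n a ⊆ fB n b := by
  constructor
  · rintro ⟨hlen, hval⟩ q ⟨hqT, hqa⟩
    refine ⟨hqT, fun hqk => ?_⟩
    have h1 := hqa (le_trans hqk hlen)
    have h2 := hval (q.1 - 1) (by have := hqT.1; omega)
    omega
  · intro hsub
    have hka := ha.1
    have hkb := hb.1
    have hkan := ha.2.1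
    have hkbn := hb.2.1
    have hlen : b.length ≤ a.length := by
      by_contra hc
      push_neg at hc
      -- a.length < b.length
      have hlasta := ha.2.2.2.2.2
      have hq : (a.length, a.getD (a.length - 1) 0) ∈ fB n a := by
        refine ⟨⟨by omega, by omega, by omega⟩, fun _ => ?_⟩
        simp
      obtain ⟨hT, hcond⟩ := hsub hq
      have h2 := hcond (by omega)
      simp only at h2
      -- b's entry at index a.length - 1 is ≤ 2n - b.length
      have hbpre := hb.2.2.2.2.1 (by omega)
      have hmono := hs_mono hb (a.length - 1) (b.length - 2) (by omega) (by omega)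
      omega
    refine ⟨hlen, fun j hj => ?_⟩
    have hga := hs_ge ha j (by omega)
    have hgb := hs_ge hb j hj
    rcases eq_or_lt_of_le hga with heq | hlt
    · omega
    · have hq : (j + 1, a.getD j 0) ∈ fB n a := by
        refine ⟨⟨by omega, by omega, ?_⟩, fun _ => by simp⟩
        have := hs_cap ha j (by omega)
        omega
      obtain ⟨hT, hcond⟩ := hsub hq
      have := hcond (by omega)
      simpa using this


section surj
variable {n : ℕ} {I : Set (ℕ × ℕ)} (hn : 0 < n) (hI : IsIdealTB n I)

noncomputable def rowv (I : Set (ℕ × ℕ)) (r : ℕ) : ℕ := max r (sSup {b | (r, b) ∈ I})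

include hI

lemma rowB_bdd (r : ℕ) : BddAbove {b | (r, b) ∈ I} :=
  ⟨2 * n, fun b hb => by have := hI.1 _ hb; have h1 := this.1; have := this.2.2; omega⟩

lemma memB_iff (r b : ℕ) :
    (r, b) ∈ I ↔ MemTB n (r, b) ∧ b ≤ rowv I r := by
  constructor
  · intro hmem
    exact ⟨hI.1 _ hmem, le_trans (le_csSup (rowB_bdd hI r) hmem) (le_max_right _ _)⟩
  · rintro ⟨hm, hle⟩
    have hrb : r < b := hm.2.1
    have hs : b ≤ sSup {b | (r, b) ∈ I} := by
      rcases le_max_iff.mp hle with hcs | hcs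
      · omega
      · exact hcs
    have hne : {b | (r, b) ∈ I}.Nonempty := by
      by_contra hc
      rw [Set.not_nonempty_iff_eq_empty] at hc
      rw [hc] at hs
      simp [csSup_empty] at hs
      omega
    have hmemS := Nat.sSup_mem hne (rowB_bdd hI r)
    exact hI.2 _ hmemS (r, b) hm ⟨le_refl _, hs⟩

lemma rowvB_cap (r : ℕ) (hr1 : 1 ≤ r) (hr : r ≤ n) : rowv I r ≤ 2 * n + 1 - r := by
  rcases Set.eq_empty_or_nonempty {b | (r, b) ∈ I} with he | hne
  · simp only [rowv, he, csSup_empty]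
    have : max r (⊥ : ℕ) = r := by simp
    rw [this]; omega
  · have hT := hI.1 _ (Nat.sSup_mem hne (rowB_bdd hI r))
    have := hT.2.2
    simp only [rowv, max_le_iff]
    exact ⟨by omega, this⟩

lemma rowvB_ge (r : ℕ) : r ≤ rowv I r := le_max_left _ _

lemma rowvB_step (r : ℕ) (hr1 : 1 ≤ r) (hr : r < n) :
    min (rowv I r) (2 * n - r) ≤ rowv I (r + 1) := by
  set m := min (rowv I r) (2 * n - r) with hm
  rcases le_or_gt m (r + 1) with hcase | hcase
  · have := rowvB_ge (I := I) hI (r + 1)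
    omega
  · -- m ≥ r + 2
    have hvr : r < rowv I r := by omega
    have hmem : (r, rowv I r) ∈ I := by
      apply (memB_iff hI r (rowv I r)).mpr
      exact ⟨⟨hr1, hvr, rowvB_cap hI r hr1 (by omega)⟩, le_refl _⟩
    have hmem2 : (r + 1, m) ∈ I := by
      apply hI.2 _ hmem (r + 1, m) ⟨by omega, by omega, by omega⟩ ⟨by omega, by omega⟩
    have := (memB_iff hI (r + 1) m).mp hmem2
    exact this.2

include hn

lemma existsK : ∃ j, j < n ∧ 2 * n - (j + 1) ≤ rowv I (j + 1) := by
  refine ⟨n - 1, by omega, ?_⟩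
  have := rowvB_ge (I := I) hI (n - 1 + 1)
  omega

/-- the length of the height sequence extracted from an ideal -/
noncomputable def KB (hn : 0 < n) (hI : IsIdealTB n I) : ℕ := Nat.find (existsK hn hI) + 1

lemma KB_ge1 : 1 ≤ KB hn hI := by simp only [KB]; omega

lemma KB_len : KB hn hI ≤ n := by
  have := (Nat.find_spec (existsK hn hI)).1
  simp only [KB]; omega

lemma KB_spec : 2 * n - KB hn hI ≤ rowv I (KB hn hI) :=
  (Nat.find_spec (existsK hn hI)).2

lemma KB_min : ∀ r, 1 ≤ r → r < KB hn hI → rowv I r < 2 * n - r := by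
  intro r h1 h2
  have hmin := Nat.find_min (existsK hn hI) (m := r - 1) (by simp only [KB] at h2; omega)
  push_neg at hmin
  have hrn : r - 1 < n := by have := KB_len hn hI; omega
  have := hmin hrn
  have e : r - 1 + 1 = r := by omega
  rw [e] at this
  omega

lemma rowvB_monoK : ∀ r, 1 ≤ r → r < KB hn hI → rowv I r ≤ rowv I (r + 1) := by
  intro r h1 h2
  have hlt := KB_min hn hI r h1 h2
  have hstep := rowvB_step hI r h1 (by have := KB_len hn hI; omega)
  omega

lemma rowvB_monoK' : ∀ r r', 1 ≤ r → r ≤ r' → r' ≤ KB hn hI → rowv I r ≤ rowv I r' := by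
  have key : ∀ d r, 1 ≤ r → r + d ≤ KB hn hI → rowv I r ≤ rowv I (r + d) := by
    intro d
    induction d with
    | zero => intro r _ _; simp
    | succ m ih =>
      intro r h1 h2
      have ha := ih r h1 (by omega)
      have hb := rowvB_monoK hn hI (r + m) (by omega) (by omega)
      have e : r + (m + 1) = r + m + 1 := by ring
      rw [e]
      omega
  intro r r' h1 h2 h3
  have := key (r' - r) r h1 (by omega)
  have e : r + (r' - r) = r' := by omega
  rwa [e] at this

lemma rowvB_full : ∀ r, KB hn hI ≤ r → r ≤ n → 2 * n - r ≤ rowv I r := by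
  have key : ∀ d, KB hn hI + d ≤ n → 2 * n - (KB hn hI + d) ≤ rowv I (KB hn hI + d) := by
    intro d
    induction d with
    | zero => intro _; simpa using KB_spec hn hI
    | succ m ih =>
      intro hd
      have ha := ih (by omega)
      have hstep := rowvB_step hI (KB hn hI + m) (by have := KB_ge1 hn hI; omega) (by omega)
      have e : KB hn hI + (m + 1) = KB hn hI + m + 1 := by ring
      rw [e]
      omega
  intro r h1 h2
  have := key (r - KB hn hI) (by omega)
  have e : KB hn hI + (r - KB hn hI) = r := by omega
  rwa [e] at this

lemma rowvB_full' : ∀ r, KB hn hI < r → r ≤ n → rowv I r = 2 * n + 1 - r := by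
  intro r h1 h2
  have hprev := rowvB_full hn hI (r - 1) (by omega) (by omega)
  have hstep := rowvB_step hI (r - 1) (by have := KB_ge1 hn hI; omega) (by omega)
  have e : r - 1 + 1 = r := by omega
  rw [e] at hstep
  have hcap := rowvB_cap hI r (by omega) h2
  omega

/-- the height sequence extracted from an ideal -/
noncomputable def hB (hn : 0 < n) (hI : IsIdealTB n I) : List ℕ :=
  (List.range (KB hn hI)).map (fun j => rowv I (j + 1))

lemma hB_len : (hB hn hI).length = KB hn hI := by simp [hB]

lemma hB_getD (j : ℕ) (hj : j < KB hn hI) : (hB hn hI).getD j 0 = rowv I (j + 1) := by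
  rw [List.getD_eq_getElem _ _ (by simpa [hB] using hj)]
  simp [hB]

lemma hB_heightseq : IsHeightSeqB n (hB hn hI) := by
  have hK1 := KB_ge1 hn hI
  have hKn := KB_len hn hI
  rw [IsHeightSeqB, hB_len]
  refine ⟨hK1, hKn, ?_, ?_, ?_, ?_⟩
  · intro i hi
    rw [hB_getD hn hI i hi]
    exact rowvB_ge hI (i + 1)
  · intro i hi
    rw [hB_getD hn hI i (by omega), hB_getD hn hI (i + 1) (by omega)]
    exact rowvB_monoK hn hI (i + 1) (by omega) (by omega)
  · intro h2
    rw [hB_getD hn hI _ (by omega)]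
    have e : KB hn hI - 2 + 1 = KB hn hI - 1 := by omega
    rw [e]
    have := KB_min hn hI (KB hn hI - 1) (by omega) (by omega)
    omega
  · rw [hB_getD hn hI _ (by omega)]
    have e : KB hn hI - 1 + 1 = KB hn hI := by omega
    rw [e]
    have h1 := KB_spec hn hI
    have h2 := rowvB_cap hI (KB hn hI) (by omega) hKn
    omega

lemma fB_hB : fB n (hB hn hI) = I := by
  have hK1 := KB_ge1 hn hI
  have hKn := KB_len hn hI
  ext q
  obtain ⟨r, b⟩ := q
  constructor
  · rintro ⟨hm, hcond⟩
    have hr1 : 1 ≤ r := hm.1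
    have hrn : r ≤ n := by have := hm.2.1; have := hm.2.2; omega
    rcases le_or_gt r (KB hn hI) with hcase | hcase
    · have := hcond (by rw [hB_len]; omega)
      rw [hB_getD hn hI (r - 1) (by omega)] at this
      have e : r - 1 + 1 = r := by omega
      rw [e] at this
      exact (memB_iff hI r b).mpr ⟨hm, this⟩
    · have hfull := rowvB_full' hn hI r hcase hrn
      apply (memB_iff hI r b).mpr
      refine ⟨hm, ?_⟩
      have := hm.2.2
      omega
  · intro hmem
    have h2 := (memB_iff hI r b).mp hmem
    have hr1 : 1 ≤ r := h2.1.1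
    refine ⟨h2.1, fun hrk => ?_⟩
    rw [hB_len] at hrk
    rw [hB_getD hn hI (r - 1) (by omega)]
    have e : r - 1 + 1 = r := by omega
    rw [e]
    exact h2.2

end surj

/-- The full part-B statement. -/
lemma partB (n : ℕ) (hn : 0 < n) :
    ∃ g : {h : List ℕ // IsHeightSeqB n h} → {I : Set (ℕ × ℕ) // IsIdealTB n I},
      Function.Bijective g ∧ ∀ a b, DomLeB a.1 b.1 ↔ (g a).1 ⊆ (g b).1 := by
  refine ⟨fun a => ⟨fB n a.1, fB_ideal a.2⟩, ⟨?_, ?_⟩, ?_⟩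
  · intro a b hab
    have h : fB n a.1 = fB n b.1 := congrArg Subtype.val hab
    have h1 : DomLeB a.1 b.1 := (fB_le_iff a.2 b.2).mpr (le_of_eq h)
    have h2 : DomLeB b.1 a.1 := (fB_le_iff b.2 a.2).mpr (ge_of_eq h)
    apply Subtype.ext
    obtain ⟨hl1, hv1⟩ := h1
    obtain ⟨hl2, hv2⟩ := h2
    have hlen : a.1.length = b.1.length := le_antisymm hl2 hl1
    apply List.ext_getElem hlen
    intro i ha' hb'
    have e1 := List.getD_eq_getElem a.1 0 ha'
    have e2 := List.getD_eq_getElem b.1 0 hb'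
    have := hv1 i (by omega)
    have := hv2 i (by omega)
    omega
  · rintro ⟨I, hI⟩
    exact ⟨⟨hB hn hI, hB_heightseq hn hI⟩, Subtype.ext (fB_hB hn hI)⟩
  · intro a b
    exact fB_le_iff a.2 b.2

end DyckAuxB


theorem dyck_lattices_iso_ideals (n : ℕ) (hn : 0 < n) :
    (∃ f : {h : Fin n → ℕ // h ∈ DyckASet n} → {I : Set (ℕ × ℕ) // IsIdealTA n I},
      Function.Bijective f ∧ ∀ a b, a.1 ≤ b.1 ↔ (f a).1 ⊆ (f b).1) ∧
    (∃ g : {h : List ℕ // IsHeightSeqB n h} → {I : Set (ℕ × ℕ) // IsIdealTB n I},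
      Function.Bijective g ∧ ∀ a b, DomLeB a.1 b.1 ↔ (g a).1 ⊆ (g b).1) :=
  ⟨DyckAux.partA n hn, DyckAuxB.partB n hn⟩
end

section
/- Let h^(1) = (h^(1)_1,…,h^(1)_n) and h^(2) = (h^(2)_1,…,h^(2)_n) be elements of L_{n,m}. Define the sequence h = (h_1,…,h_n) recursively from the right by: h_n = m if h^(1)_n ≤ h^(2)_n and h_n = h^(2)_n otherwise; and for i < n, h_i = h_{i+1} if h^(1)_i ≤ h^(2)_i and h_i = h^(2)_i otherwise. Then h ∈ L_{n,m}, and h is the relative pseudocomplement of h^(1) with respect to h^(2), i.e., h is the greatest element z of L_{n,m} such that min{h^(1)_i, z_i} ≤ h^(2)_i for all i ∈ [n]. -/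
/-- `L_{n,m}`: weakly increasing sequences `h : Fin n → ℕ` with all entries at most `m`,
under the componentwise (dominance) order. -/
def LPathSet (n m : ℕ) : Set (Fin n → ℕ) :=
  {h | Monotone h ∧ ∀ i, h i ≤ m}

theorem rel_pseudocomplement_paths (n m : ℕ) (h1 h2 h : Fin n → ℕ)
    (H1 : h1 ∈ LPathSet n m) (H2 : h2 ∈ LPathSet n m)
    -- the recursive definition of `h` from the right:
    (hlast : ∀ i : Fin n, (i : ℕ) + 1 = n →
      h i = if h1 i ≤ h2 i then m else h2 i)
    (hrec : ∀ i : Fin n, ∀ hi : (i : ℕ) + 1 < n,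
      h i = if h1 i ≤ h2 i then h ⟨(i : ℕ) + 1, hi⟩ else h2 i) :
    h ∈ LPathSet n m ∧
    (∀ i, min (h1 i) (h i) ≤ h2 i) ∧
    (∀ z ∈ LPathSet n m, (∀ i, min (h1 i) (z i) ≤ h2 i) → z ≤ h) := by
  obtain ⟨h1mono, h1le⟩ := H1
  obtain ⟨h2mono, h2le⟩ := H2
  -- backward induction principle
  have back : ∀ (P : Fin n → Prop),
      (∀ i : Fin n, (i : ℕ) + 1 = n → P i) →
      (∀ i : Fin n, ∀ hi : (i : ℕ) + 1 < n, P ⟨(i : ℕ) + 1, hi⟩ → P i) →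
      ∀ i, P i := by
    intro P hbase hstep i
    obtain ⟨iv, hiv⟩ := i
    have key : ∀ k iv (hiv : iv < n), n - (iv + 1) = k → P ⟨iv, hiv⟩ := by
      intro k
      induction k with
      | zero =>
        intro iv hiv hk
        refine hbase ⟨iv, hiv⟩ ?_
        simpa using by omega
      | succ k ih =>
        intro iv hiv hk
        have h1lt : iv + 1 < n := by omega
        exact hstep ⟨iv, hiv⟩ h1lt (ih (iv + 1) h1lt (by omega))
    exact key (n - (iv + 1)) iv hiv rfl
  -- h dominates h2 and is bounded by m
  have hdom : ∀ i, h2 i ≤ h i ∧ h i ≤ m := by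
    refine back _ ?_ ?_
    · intro i hi
      rw [hlast i hi]
      split_ifs with hc
      · exact ⟨h2le i, le_refl _⟩
      · exact ⟨le_refl _, h2le i⟩
    · intro i hi ih
      rw [hrec i hi]
      split_ifs with hc
      · refine ⟨le_trans ?_ ih.1, ih.2⟩
        exact h2mono (by simp [Fin.le_def])
      · exact ⟨le_refl _, h2le i⟩
  -- adjacent monotonicity gives monotone
  have hadj : ∀ i : Fin n, ∀ hi : (i : ℕ) + 1 < n, h i ≤ h ⟨(i : ℕ) + 1, hi⟩ := by
    intro i hi
    rw [hrec i hi]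
    split_ifs with hc
    · exact le_refl _
    · exact le_trans (h2mono (by simp [Fin.le_def])) (hdom _).1
  have hmono : Monotone h := by
    intro a b hab
    obtain ⟨av, ha⟩ := a
    obtain ⟨bv, hb⟩ := b
    have hab' : av ≤ bv := hab
    clear hab
    obtain ⟨d, rfl⟩ := Nat.le.dest hab'
    clear hab'
    induction d with
    | zero => exact le_refl _
    | succ d ih =>
      have hd : av + d < n := by omega
      exact le_trans (ih hd) (hadj ⟨av + d, hd⟩ hb)
  refine ⟨⟨hmono, fun i => (hdom i).2⟩, ?_, ?_⟩
  · intro i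
    by_cases hc : h1 i ≤ h2 i
    · exact le_trans (min_le_left _ _) hc
    · have : h i = h2 i := by
        rcases Nat.lt_or_ge ((i : ℕ) + 1) n with hlt | hge
        · rw [hrec i hlt]; simp [hc]
        · rw [hlast i (by omega)]; simp [hc]
      rw [this]; exact min_le_right _ _
  · intro z hz hzmin
    obtain ⟨zmono, zle⟩ := hz
    refine back (fun i => z i ≤ h i) ?_ ?_
    · intro i hi
      rw [hlast i hi]
      split_ifs with hc
      · exact zle i
      · have := hzmin i
        omega
    · intro i hi ih
      rw [hrec i hi]
      split_ifs with hc
      · exact le_trans (zmono (by simp [Fin.le_def])) ih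
      · have := hzmin i
        omega
end

section
/- An element h of L_{n,m} is regular, i.e., (h^c)^c = h where h^c denotes the pseudocomplement of h, if and only if h is the least element (0,…,0) or the greatest element (m,…,m) of L_{n,m}. -/
/-- `z` is the pseudocomplement of `x` in `L_{n,m}`: `z` is the greatest element
of `L_{n,m}` with `x ∧ z ≤ 0`, i.e. `min (x i) (z i) ≤ 0` for all `i`
(the least element being the constant sequence `0`). -/
def IsPseudocomplementL (n m : ℕ) (x z : Fin n → ℕ) : Prop :=
  z ∈ LPathSet n m ∧ (∀ i, min (x i) (z i) ≤ 0) ∧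
    ∀ w ∈ LPathSet n m, (∀ i, min (x i) (w i) ≤ 0) → w ≤ z

theorem regular_iff_bot_or_top (n m : ℕ) (h hc hcc : Fin n → ℕ)
    (H : h ∈ LPathSet n m)
    (Hc : IsPseudocomplementL n m h hc) (Hcc : IsPseudocomplementL n m hc hcc) :
    hcc = h ↔ (h = fun _ => 0) ∨ (h = fun _ => m) := by
  obtain ⟨hmono, hle⟩ := H
  obtain ⟨⟨hcmono, hcle⟩, hczero, hcmax⟩ := Hc
  obtain ⟨⟨hccmono, hccle⟩, hcczero, hccmax⟩ := Hcc
  by_cases h0 : ∀ i, h i = 0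
  · have hc_eq : ∀ i, hc i = m := fun i =>
      le_antisymm (hcle i)
        (hcmax (fun _ => m) ⟨monotone_const, fun _ => le_rfl⟩ (fun j => by simp [h0 j]) i)
    have hcc_eq : ∀ i, hcc i = 0 := by
      intro i
      have h1 := hcczero i
      have h2 := hccle i
      rw [hc_eq] at h1
      omega
    constructor
    · intro _; left; funext i; exact h0 i
    · intro _; funext i; rw [hcc_eq i, h0 i]
  · push_neg at h0
    obtain ⟨k, hk⟩ := h0
    have hc0 : ∀ i, hc i = 0 := by
      intro i
      rcases le_or_gt k i with hki | hik
      · have h1 := hczero i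
        have hpos : 0 < h i := lt_of_lt_of_le (Nat.pos_of_ne_zero hk) (hmono hki)
        omega
      · have h1 := hcmono hik.le
        have h2 := hczero k
        have hpos : 0 < h k := Nat.pos_of_ne_zero hk
        omega
    have hcc_eq : hcc = fun _ => m := by
      funext i
      exact le_antisymm (hccle i)
        (hccmax (fun _ => m) ⟨monotone_const, fun _ => le_rfl⟩ (fun j => by simp [hc0 j]) i)
    rw [hcc_eq]
    constructor
    · intro he; right; exact he.symm
    · rintro (he | he)
      · exact absurd (congrFun he k) hk
      · exact he.symm
end

section
/- Let h^(1) = (h^(1)_1,…,h^(1)_n) and h^(2) = (h^(2)_1,…,h^(2)_n) be elements of D_n^A. Define the sequence h = (h_1,…,h_n) recursively from the right by: h_n = n; and for i < n, h_i = h_{i+1} if h^(1)_i ≤ h^(2)_i and h_i = h^(2)_i otherwise. Then h ∈ D_n^A, and h is the relative pseudocomplement of h^(1) with respect to h^(2) in the lattice D_n^A, i.e., h is the greatest element z of D_n^A such that min{h^(1)_i, z_i} ≤ h^(2)_i for all i ∈ [n]. -/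
theorem rel_pseudocomplement_dyckA (n : ℕ) (h1 h2 h : Fin n → ℕ)
    (H1 : h1 ∈ DyckASet n) (H2 : h2 ∈ DyckASet n)
    -- the recursive definition of `h` from the right: `h_n = n`, and for `i < n`,
    -- `h_i = h_{i+1}` if `h1_i ≤ h2_i`, and `h_i = h2_i` otherwise.
    (hlast : ∀ i : Fin n, (i : ℕ) + 1 = n → h i = n)
    (hrec : ∀ i : Fin n, ∀ hi : (i : ℕ) + 1 < n,
      h i = if h1 i ≤ h2 i then h ⟨(i : ℕ) + 1, hi⟩ else h2 i) :
    h ∈ DyckASet n ∧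
    (∀ i, min (h1 i) (h i) ≤ h2 i) ∧
    (∀ z ∈ DyckASet n, (∀ i, min (h1 i) (z i) ≤ h2 i) → z ≤ h) := by
  obtain ⟨h1mono, h1bd⟩ := H1
  obtain ⟨h2mono, h2bd⟩ := H2
  -- main downward induction
  have key : ∀ k : ℕ, ∀ i : Fin n, n - ((i : ℕ) + 1) = k →
      h2 i ≤ h i ∧ h i ≤ n ∧ ∀ hi : (i : ℕ) + 1 < n, h i ≤ h ⟨(i : ℕ) + 1, hi⟩ := by
    intro k
    induction k with
    | zero =>
      intro i hk
      have hin : (i : ℕ) + 1 = n := by have := i.isLt; omega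
      have := hlast i hin
      refine ⟨?_, by omega, ?_⟩
      · have := (h2bd i).2; omega
      · intro hi; omega
    | succ k ih =>
      intro i hk
      have hi : (i : ℕ) + 1 < n := by have := i.isLt; omega
      set j : Fin n := ⟨(i : ℕ) + 1, hi⟩ with hjdef
      have hij : i ≤ j := by simp [Fin.le_def, hjdef]
      obtain ⟨hj1, hj2, _⟩ := ih j (by simp [hjdef]; omega)
      have h2ij : h2 i ≤ h2 j := h2mono hij
      rw [hrec i hi]
      by_cases hc : h1 i ≤ h2 i
      · rw [if_pos hc]
        exact ⟨le_trans h2ij hj1, hj2, fun _ => le_refl _⟩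
      · rw [if_neg hc]
        exact ⟨le_refl _, (h2bd i).2, fun _ => le_trans h2ij hj1⟩
  have hge : ∀ i : Fin n, h2 i ≤ h i := fun i => (key _ i rfl).1
  have hub : ∀ i : Fin n, h i ≤ n := fun i => (key _ i rfl).2.1
  have hstep : ∀ (i : Fin n) (hi : (i : ℕ) + 1 < n), h i ≤ h ⟨(i : ℕ) + 1, hi⟩ :=
    fun i hi => (key _ i rfl).2.2 hi
  have hmono : Monotone h := by
    intro a b hab
    obtain ⟨d, hd⟩ : ∃ d, (b : ℕ) = (a : ℕ) + d := ⟨(b : ℕ) - (a : ℕ), by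
      have := (Fin.le_def.mp hab); omega⟩
    clear hab
    induction d generalizing b with
    | zero =>
      have : a = b := Fin.ext (by omega)
      rw [this]
    | succ d ihd =>
      have hcd : (a : ℕ) + d < n := by have := b.isLt; omega
      set c : Fin n := ⟨(a : ℕ) + d, hcd⟩ with hcdef
      have h1le : h a ≤ h c := ihd (b := c) rfl
      have hcb : (c : ℕ) + 1 < n ∨ (c : ℕ) + 1 = n := by have := b.isLt; omega
      have hbeq : (b : ℕ) = (c : ℕ) + 1 := by simp [hcdef]; omega
      rcases hcb with hcb | hcb
      · have := hstep c hcb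
        have hb : b = ⟨(c : ℕ) + 1, hcb⟩ := Fin.ext hbeq
        rw [hb]; omega
      · have : h b = n := hlast b (by omega)
        have := hub a
        omega
  refine ⟨⟨hmono, fun i => ⟨le_trans (h2bd i).1 (hge i), hub i⟩⟩, ?_, ?_⟩
  · intro i
    by_cases hc : h1 i ≤ h2 i
    · omega
    · rcases lt_or_ge ((i : ℕ) + 1) n with hi | hi
      · have := hrec i hi
        rw [if_neg hc] at this
        omega
      · have hin : (i : ℕ) + 1 = n := by have := i.isLt; omega
        have := (h1bd i).1; have := (h1bd i).2
        have := (h2bd i).1; have := (h2bd i).2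
        omega
  · rintro z ⟨zmono, zbd⟩ hz
    intro i
    -- downward induction again
    have key2 : ∀ k : ℕ, ∀ i : Fin n, n - ((i : ℕ) + 1) = k → z i ≤ h i := by
      intro k
      induction k with
      | zero =>
        intro i hk
        have hin : (i : ℕ) + 1 = n := by have := i.isLt; omega
        have := hlast i hin
        have := (zbd i).2
        omega
      | succ k ih =>
        intro i hk
        have hi : (i : ℕ) + 1 < n := by have := i.isLt; omega
        set j : Fin n := ⟨(i : ℕ) + 1, hi⟩ with hjdef
        have hij : i ≤ j := by simp [Fin.le_def, hjdef]
        have hzj : z j ≤ h j := ih j (by simp [hjdef]; omega)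
        rw [hrec i hi]
        by_cases hc : h1 i ≤ h2 i
        · rw [if_pos hc]
          exact le_trans (zmono hij) hzj
        · rw [if_neg hc]
          have := hz i
          omega
    exact key2 _ i rfl
end

section
/- An element h = (h_1,…,h_n) of D_n^A is regular, i.e., (h^c)^c = h where h^c denotes the pseudocomplement of h in the lattice D_n^A, if and only if for every i ∈ [n], either h_i = i, or, writing c = h_i (so c > i), one has h_j = c for all j with i ≤ j ≤ c. -/
/-- `z` is the pseudocomplement of `x` in `D_n^A`: the greatest element `z` of `D_n^A`
with `x ∧ z ≤ 0`, where `∧` is the componentwise minimum and `0 = (1, 2, …, n)` is the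
least element. -/
def IsPseudocomplementA (n : ℕ) (x z : Fin n → ℕ) : Prop :=
  z ∈ DyckASet n ∧ (∀ i : Fin n, min (x i) (z i) ≤ (i : ℕ) + 1) ∧
    ∀ w ∈ DyckASet n, (∀ i : Fin n, min (x i) (w i) ≤ (i : ℕ) + 1) → w ≤ z

/-- Explicit formula for the pseudocomplement of `x` in `D_n^A`:
`(pcF n x) i = min (n, min { j+1 : j ≥ i, x j > j+1 })`. -/
def pcF (n : ℕ) (x : Fin n → ℕ) (i : Fin n) : ℕ :=
  Finset.univ.fold min n
    (fun j : Fin n => if (i : ℕ) ≤ (j : ℕ) ∧ (j : ℕ) + 1 < x j then (j : ℕ) + 1 else n)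

lemma pcF_le_of (n : ℕ) (x : Fin n → ℕ) (i k : Fin n)
    (h1 : (i : ℕ) ≤ (k : ℕ)) (h2 : (k : ℕ) + 1 < x k) : pcF n x i ≤ (k : ℕ) + 1 := by
  refine (Finset.fold_min_le _).mpr (Or.inr ⟨k, Finset.mem_univ k, ?_⟩)
  rw [if_pos ⟨h1, h2⟩]

lemma pcF_le_n (n : ℕ) (x : Fin n → ℕ) (i : Fin n) : pcF n x i ≤ n :=
  (Finset.fold_min_le _).mpr (Or.inl le_rfl)

lemma le_pcF (n : ℕ) (x : Fin n → ℕ) (i : Fin n) {c : ℕ} (hn : c ≤ n)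
    (hall : ∀ j : Fin n, (i : ℕ) ≤ (j : ℕ) → (j : ℕ) + 1 < x j → c ≤ (j : ℕ) + 1) :
    c ≤ pcF n x i := by
  refine (Finset.le_fold_min _).mpr ⟨hn, fun j _ => ?_⟩
  split
  next hj => exact hall j hj.1 hj.2
  next => exact hn

lemma pcF_mem (n : ℕ) (x : Fin n → ℕ) : pcF n x ∈ DyckASet n := by
  refine ⟨?_, fun i => ⟨?_, pcF_le_n n x i⟩⟩
  · intro i i' hii'
    refine (Finset.le_fold_min _).mpr ⟨pcF_le_n n x i, fun j _ => ?_⟩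
    split
    next hj => exact pcF_le_of n x i j (le_trans hii' hj.1) hj.2
    next => exact pcF_le_n n x i
  · refine le_pcF n x i i.isLt fun j hj _ => by omega

lemma pcF_spec (n : ℕ) (x : Fin n → ℕ) (i : Fin n) :
    min (x i) (pcF n x i) ≤ (i : ℕ) + 1 := by
  rcases le_or_gt (x i) ((i : ℕ) + 1) with hx | hx
  · exact le_trans (min_le_left _ _) hx
  · exact le_trans (min_le_right _ _) (pcF_le_of n x i i le_rfl hx)

lemma pc_eq (n : ℕ) (x z : Fin n → ℕ) (hz : IsPseudocomplementA n x z) :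
    z = pcF n x := by
  have h1 : pcF n x ≤ z := hz.2.2 _ (pcF_mem n x) (pcF_spec n x)
  funext i
  refine le_antisymm ?_ (h1 i)
  refine (Finset.le_fold_min _).mpr ⟨(hz.1.2 i).2, fun j _ => ?_⟩
  split
  next hj =>
    have hmin := hz.2.1 j
    have hzj : z j ≤ (j : ℕ) + 1 := by omega
    exact le_trans (hz.1.1 (show i ≤ j from hj.1)) hzj
  next => exact (hz.1.2 i).2

lemma pcF_attained (n : ℕ) (x : Fin n → ℕ) (i : Fin n) :
    pcF n x i = n ∨
      ∃ k : Fin n, (i : ℕ) ≤ (k : ℕ) ∧ (k : ℕ) + 1 < x k ∧ pcF n x i = (k : ℕ) + 1 := by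
  have hle : pcF n x i ≤ n := pcF_le_n n x i
  rcases eq_or_lt_of_le hle with he | hlt
  · exact Or.inl he
  · right
    by_contra hcon
    push_neg at hcon
    have : pcF n x i + 1 ≤ pcF n x i := by
      refine (Finset.le_fold_min _).mpr ⟨by omega, fun j _ => ?_⟩
      split
      next hj =>
        have hne := hcon j hj.1 hj.2
        have : pcF n x i ≤ (j : ℕ) + 1 := pcF_le_of n x i j hj.1 hj.2
        omega
      next => omega
    omega

theorem regular_dyckA_iff (n : ℕ) (h hc hcc : Fin n → ℕ)
    (H : h ∈ DyckASet n)
    (Hc : IsPseudocomplementA n h hc) (Hcc : IsPseudocomplementA n hc hcc) :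
    hcc = h ↔
      ∀ i : Fin n, h i = (i : ℕ) + 1 ∨
        ((i : ℕ) + 1 < h i ∧
          ∀ j : Fin n, (i : ℕ) ≤ (j : ℕ) → (j : ℕ) + 1 ≤ h i → h j = h i) := by
  have hceq := pc_eq n h hc Hc
  have hcceq := pc_eq n hc hcc Hcc
  have hmono := H.1
  have hbd := H.2
  have hcbd := Hc.1.2
  -- h j > j+1 forces hc j = j+1
  have factA : ∀ j : Fin n, (j : ℕ) + 1 < h j → hc j = (j : ℕ) + 1 := by
    intro j hj
    have h1 := Hc.2.1 j
    have h2 := (hcbd j).1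
    omega
  -- h j = j+1 and j+1 < n force hc j > j+1
  have factC : ∀ j : Fin n, h j = (j : ℕ) + 1 → (j : ℕ) + 1 < n → (j : ℕ) + 1 < hc j := by
    intro j hj hjn
    rw [hceq]
    have hge : (j : ℕ) + 2 ≤ pcF n h j := by
      refine le_pcF n h j (by omega) ?_
      intro k hk hk2
      rcases eq_or_lt_of_le hk with he | hl
      · exfalso
        have : j = k := Fin.ext he
        subst this
        omega
      · omega
    omega
  have hle : h ≤ hcc := Hcc.2.2 h H (fun i => by have := Hc.2.1 i; omega)
  have factE : ∀ i k : Fin n, (i : ℕ) ≤ (k : ℕ) → (k : ℕ) + 1 < hc k →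
      hcc i ≤ (k : ℕ) + 1 := by
    intro i k h1 h2
    rw [hcceq]
    exact pcF_le_of n hc i k h1 h2
  have factF : ∀ i : Fin n, hcc i ≤ n := fun i => (Hcc.1.2 i).2
  have factG : ∀ i : Fin n, hcc i = n ∨
      ∃ k : Fin n, (i : ℕ) ≤ (k : ℕ) ∧ (k : ℕ) + 1 < hc k ∧ hcc i = (k : ℕ) + 1 := by
    intro i
    rw [hcceq]
    exact pcF_attained n hc i
  constructor
  · -- regular → condition
    intro heq i
    rcases eq_or_lt_of_le (hbd i).1 with hi | hi
    · exact Or.inl hi.symm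
    · right
      refine ⟨hi, ?_⟩
      have hcn : h i ≤ n := (hbd i).2
      have hj0lt : h i - 1 < n := by omega
      set j0 : Fin n := ⟨h i - 1, hj0lt⟩ with hj0def
      have hj0val : (j0 : ℕ) = h i - 1 := rfl
      have hij0 : (i : ℕ) ≤ (j0 : ℕ) := by omega
      have hhj0_ge : h i ≤ h j0 := hmono (show i ≤ j0 from hij0)
      have hhcci : hcc i = h i := by rw [heq]
      have hhj0 : h j0 = h i := by
        by_contra hne
        have hgt : (j0 : ℕ) + 1 < h j0 := by omega
        have hA := factA j0 hgt
        rcases factG i with hn' | ⟨k, hk1, hk2, hk3⟩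
        · have := (hbd j0).2
          omega
        · have hkj : k = j0 := Fin.ext (by omega)
          subst hkj
          omega
      intro j hij hjc
      have h1 : h i ≤ h j := hmono (show i ≤ j from hij)
      have h2 : h j ≤ h j0 := hmono (show j ≤ j0 from by
        show (j : ℕ) ≤ (j0 : ℕ); omega)
      omega
  · -- condition → regular
    intro hcond
    funext i
    refine le_antisymm ?_ (hle i)
    rcases hcond i with hi | ⟨hi, hall⟩
    · rcases eq_or_lt_of_le (show (i : ℕ) + 1 ≤ n from i.isLt) with he | hl
      · have := factF i; omega
      · have h1 := factC i hi hl
        have h2 := factE i i le_rfl h1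
        omega
    · rcases eq_or_lt_of_le ((hbd i).2) with he | hl
      · have := factF i; omega
      · have hj0lt : h i - 1 < n := by omega
        set j0 : Fin n := ⟨h i - 1, hj0lt⟩ with hj0def
        have hj0val : (j0 : ℕ) = h i - 1 := rfl
        have hij0 : (i : ℕ) ≤ (j0 : ℕ) := by omega
        have hhj0 : h j0 = h i := hall j0 hij0 (by omega)
        have h1 : (j0 : ℕ) + 1 < hc j0 := factC j0 (by omega) (by omega)
        have h2 := factE i j0 hij0 h1
        omega
end

section
/- For every n > 0, the number of regular elements of the lattice D_n^A (elements h with (h^c)^c = h, where h^c is the pseudocomplement) is exactly 2^{n−1}. -/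
namespace DyckAux

variable {n : ℕ}

def nvset (T : Finset (Fin n)) (i : Fin n) : Finset ℕ :=
  insert n ((T.filter (fun j => i ≤ j)).image (fun j : Fin n => (j : ℕ) + 1))

lemma mem_nvset {T : Finset (Fin n)} {i : Fin n} {y : ℕ} :
    y ∈ nvset T i ↔ y = n ∨ ∃ j, j ∈ T ∧ i ≤ j ∧ y = (j : ℕ) + 1 := by
  simp only [nvset, Finset.mem_insert, Finset.mem_image, Finset.mem_filter]
  constructor
  · rintro (h | ⟨j, ⟨hj, hij⟩, rfl⟩)
    · exact Or.inl h
    · exact Or.inr ⟨j, hj, hij, rfl⟩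
  · rintro (h | ⟨j, hj, hij, rfl⟩)
    · exact Or.inl h
    · exact Or.inr ⟨j, ⟨hj, hij⟩, rfl⟩

def nv (T : Finset (Fin n)) (i : Fin n) : ℕ :=
  (nvset T i).min' (Finset.insert_nonempty _ _)

lemma le_nv_of {T : Finset (Fin n)} {i : Fin n} {c : ℕ}
    (h : ∀ y ∈ nvset T i, c ≤ y) : c ≤ nv T i :=
  Finset.le_min' _ _ _ h

lemma nv_le_of {T : Finset (Fin n)} {i : Fin n} {y : ℕ}
    (h : y ∈ nvset T i) : nv T i ≤ y :=
  Finset.min'_le _ _ h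

lemma nv_le (T : Finset (Fin n)) (i : Fin n) : nv T i ≤ n :=
  nv_le_of (mem_nvset.mpr (Or.inl rfl))

lemma le_nv (T : Finset (Fin n)) (i : Fin n) : (i : ℕ) + 1 ≤ nv T i := by
  apply le_nv_of
  intro y hy
  rw [mem_nvset] at hy
  rcases hy with rfl | ⟨j, _, hij, rfl⟩
  · exact i.isLt
  · have := Fin.le_def.mp hij; omega

lemma nv_mono (T : Finset (Fin n)) : Monotone (nv T) := by
  intro i i' h
  apply le_nv_of
  intro y hy
  apply nv_le_of
  rw [mem_nvset] at hy ⊢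
  rcases hy with rfl | ⟨j, hj, hij, rfl⟩
  · exact Or.inl rfl
  · exact Or.inr ⟨j, hj, le_trans h hij, rfl⟩

lemma nv_of_mem {T : Finset (Fin n)} {i : Fin n} (hi : i ∈ T) : nv T i = (i : ℕ) + 1 :=
  le_antisymm (nv_le_of (mem_nvset.mpr (Or.inr ⟨i, hi, le_refl i, rfl⟩))) (le_nv T i)

lemma nv_succ {T : Finset (Fin n)} {i : Fin n} (hi : i ∉ T) (h : (i : ℕ) + 1 < n) :
    nv T i = nv T ⟨(i : ℕ) + 1, h⟩ := by
  have hfil : T.filter (fun j => i ≤ j) = T.filter (fun j => (⟨(i : ℕ) + 1, h⟩ : Fin n) ≤ j) := by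
    ext j
    simp only [Finset.mem_filter, Fin.le_def]
    constructor
    · rintro ⟨hj, hij⟩
      refine ⟨hj, ?_⟩
      rcases Nat.lt_or_ge (i : ℕ) (j : ℕ) with h' | h'
      · exact h'
      · exfalso
        have : j = i := Fin.ext (le_antisymm h' hij)
        exact hi (this ▸ hj)
    · rintro ⟨hj, hij⟩
      exact ⟨hj, by omega⟩
  simp only [nv, nvset, hfil]

lemma nv_ge_iff {T : Finset (Fin n)} {i : Fin n} :
    (i : ℕ) + 2 ≤ nv T i ↔ ((i : ℕ) + 1 < n ∧ i ∉ T) := by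
  constructor
  · intro h
    have h1 := nv_le T i
    constructor
    · omega
    · intro hi
      rw [nv_of_mem hi] at h; omega
  · rintro ⟨h1, h2⟩
    rw [nv_succ h2 h1]
    exact le_nv T ⟨(i : ℕ) + 1, h1⟩

lemma nv_mem_dyck (T : Finset (Fin n)) : nv T ∈ DyckASet n :=
  ⟨nv_mono T, fun i => ⟨le_nv T i, nv_le T i⟩⟩

def psc (x : Fin n → ℕ) : Fin n → ℕ :=
  nv (Finset.univ.filter (fun j => (j : ℕ) + 2 ≤ x j))

lemma psc_spec (x : Fin n → ℕ) : IsPseudocomplementA n x (psc x) := by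
  refine ⟨nv_mem_dyck _, ?_, ?_⟩
  · intro i
    rcases Nat.lt_or_ge ((i : ℕ) + 1) (x i) with h | h
    · have hi : i ∈ Finset.univ.filter (fun j : Fin n => (j : ℕ) + 2 ≤ x j) := by
        simp only [Finset.mem_filter, Finset.mem_univ, true_and]; omega
      have h2 : psc x i = (i : ℕ) + 1 := nv_of_mem hi
      rw [h2]
      exact min_le_right _ _
    · exact le_trans (min_le_left _ _) h
  · intro w hw hmin i
    show w i ≤ nv _ i
    apply le_nv_of
    intro y hy
    rw [mem_nvset] at hy
    rcases hy with rfl | ⟨j, hj, hij, rfl⟩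
    · exact (hw.2 i).2
    · simp only [Finset.mem_filter, Finset.mem_univ, true_and] at hj
      have hwj : w j ≤ (j : ℕ) + 1 := by
        have := hmin j; omega
      exact le_trans (hw.1 hij) hwj

lemma psc_unique {x z : Fin n → ℕ} (h : IsPseudocomplementA n x z) : z = psc x := by
  apply le_antisymm
  · exact (psc_spec x).2.2 z h.1 h.2.1
  · exact h.2.2 (psc x) (psc_spec x).1 (psc_spec x).2.1

def cmpl (T : Finset (Fin n)) : Finset (Fin n) :=
  Finset.univ.filter (fun j => (j : ℕ) + 1 < n ∧ j ∉ T)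

lemma psc_nv (T : Finset (Fin n)) : psc (nv T) = nv (cmpl T) := by
  have : Finset.univ.filter (fun j : Fin n => (j : ℕ) + 2 ≤ nv T j) = cmpl T := by
    ext j
    simp only [cmpl, Finset.mem_filter, Finset.mem_univ, true_and]
    exact nv_ge_iff
  rw [psc, this]

lemma cmpl_cmpl {T : Finset (Fin n)} (hT : ∀ i ∈ T, (i : ℕ) + 1 < n) :
    cmpl (cmpl T) = T := by
  ext j
  simp only [cmpl, Finset.mem_filter, Finset.mem_univ, true_and, not_and, not_not]
  constructor
  · rintro ⟨h1, h2⟩; exact h2 h1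
  · intro h; exact ⟨hT j h, fun _ => h⟩

lemma nv_injOn : Set.InjOn (nv (n := n))
    {T : Finset (Fin n) | ∀ i ∈ T, (i : ℕ) + 1 < n} := by
  intro T1 h1 T2 h2 heq
  ext j
  constructor
  · intro hj
    by_contra hj2
    have e1 : nv T1 j = (j : ℕ) + 1 := nv_of_mem hj
    have e2 : (j : ℕ) + 2 ≤ nv T2 j := nv_ge_iff.mpr ⟨h1 j hj, hj2⟩
    rw [heq] at e1; omega
  · intro hj
    by_contra hj1
    have e1 : nv T2 j = (j : ℕ) + 1 := nv_of_mem hj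
    have e2 : (j : ℕ) + 2 ≤ nv T1 j := nv_ge_iff.mpr ⟨h2 j hj, hj1⟩
    rw [heq] at e2; omega

end DyckAux

open DyckAux in
theorem card_regular_dyckA (n : ℕ) (hn : 0 < n) :
    {h : Fin n → ℕ | h ∈ DyckASet n ∧
      ∃ hc hcc : Fin n → ℕ, IsPseudocomplementA n h hc ∧
        IsPseudocomplementA n hc hcc ∧ hcc = h}.ncard = 2 ^ (n - 1) := by
  obtain ⟨m, rfl⟩ : ∃ m, n = m + 1 := ⟨n - 1, by omega⟩
  have hset : {h : Fin (m+1) → ℕ | h ∈ DyckASet (m+1) ∧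
      ∃ hc hcc : Fin (m+1) → ℕ, IsPseudocomplementA (m+1) h hc ∧
        IsPseudocomplementA (m+1) hc hcc ∧ hcc = h} =
      nv '' {T : Finset (Fin (m+1)) | ∀ i ∈ T, (i : ℕ) + 1 < m + 1} := by
    ext x
    constructor
    · rintro ⟨hx, hc, hcc, h1, h2, h3⟩
      have e1 : hc = psc x := psc_unique h1
      have e2 : hcc = psc hc := psc_unique h2
      have e3 : x = psc (psc x) := by rw [← e1, ← e2, h3]
      refine ⟨Finset.univ.filter (fun j => (j : ℕ) + 2 ≤ psc x j), ?_, ?_⟩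
      · intro i hi
        simp only [Finset.mem_filter, Finset.mem_univ, true_and] at hi
        have h4 := ((nv_mem_dyck (n := m+1)
          (Finset.univ.filter (fun j : Fin (m+1) => (j : ℕ) + 2 ≤ x j))).2 i).2
        rw [show nv (Finset.univ.filter (fun j : Fin (m+1) => (j : ℕ) + 2 ≤ x j)) = psc x from rfl] at h4
        omega
      · rw [← psc]
        exact e3.symm
    · rintro ⟨T, hT, rfl⟩
      have key : psc (psc (nv T)) = nv T := by
        rw [psc_nv, psc_nv, cmpl_cmpl hT]
      exact ⟨nv_mem_dyck T, psc (nv T), psc (psc (nv T)),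
        psc_spec _, psc_spec _, key⟩
  rw [hset, Set.ncard_image_of_injOn nv_injOn]
  have hS2 : {T : Finset (Fin (m+1)) | ∀ i ∈ T, (i : ℕ) + 1 < m + 1} =
      ↑((Finset.univ.erase (Fin.last m)).powerset) := by
    ext T
    simp only [Set.mem_setOf_eq, Finset.coe_powerset, Set.mem_preimage,
      Set.mem_powerset_iff, Finset.coe_subset, Finset.mem_coe]
    constructor
    · intro h i hi
      rw [Finset.mem_erase]
      refine ⟨?_, Finset.mem_univ i⟩
      intro he
      have := h i hi
      rw [he] at this
      simp [Fin.last] at this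
    · intro h i hi
      have h2 := h hi
      rw [Finset.mem_erase] at h2
      have hne := h2.1
      have hlt := i.isLt
      rcases Nat.lt_or_ge ((i : ℕ) + 1) (m + 1) with h' | h'
      · exact h'
      · exfalso; apply hne; apply Fin.ext; simp [Fin.last]; omega
  rw [hS2, Set.ncard_coe_finset, Finset.card_powerset,
    Finset.card_erase_of_mem (Finset.mem_univ _), Finset.card_univ, Fintype.card_fin]
end
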